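/- arXiv:2012.00502 — 8 statements merged into one kernel-verified Lean document; each statement's English description precedes it below -/
import Mathlib

section
/- Let p ≡ 1 (mod 4) be a prime, n = (p-1)/2, and let d be an integer that is a quadratic residue modulo p. The map sending i^2 mod p to d·i^2 mod p (for 1 ≤ i ≤ n) is a permutation π_p(d) of the set of nonzero quadratic residues modulo p, and its sign equals 1 if d is a fourth power modulo p, and -1 otherwise. -/
open scoped Classical

/-- The permutation of the nonzero quadratic residues modulo `p` (viewed as the
squares in `(ZMod p)ˣ`) given by multiplication by a square unit `u`. -/
noncomputable def piP (p : ℕ) [Fact p.Prime] (u : (ZMod p)ˣ) (hu : IsSquare u) :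
    Equiv.Perm {x : (ZMod p)ˣ // IsSquare x} where
  toFun x := ⟨u * x, hu.mul x.2⟩
  invFun x := ⟨u⁻¹ * x, hu.inv.mul x.2⟩
  left_inv x := by ext; simp [mul_assoc]
  right_inv x := by ext; simp [mul_assoc]

/-- The subgroup of squares in `(ZMod p)ˣ`. -/
def Sqsub (p : ℕ) [Fact p.Prime] : Subgroup (ZMod p)ˣ where
  carrier := {x | IsSquare x}
  mul_mem' := fun ha hb => ha.mul hb
  one_mem' := IsSquare.one
  inv_mem' := fun ha => ha.inv

lemma mem_Sqsub {p : ℕ} [Fact p.Prime] {x : (ZMod p)ˣ} : x ∈ Sqsub p ↔ IsSquare x := Iff.rfl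

/-- Multiplication action of the square subgroup on the set of squares, as a
monoid hom into permutations. -/
noncomputable def Phi (p : ℕ) [Fact p.Prime] :
    Sqsub p →* Equiv.Perm {x : (ZMod p)ˣ // IsSquare x} where
  toFun s := piP p s.1 s.2
  map_one' := Equiv.ext fun x => Subtype.ext (one_mul _)
  map_mul' s t := Equiv.ext fun x => Subtype.ext (mul_assoc _ _ _)

theorem stmt0 (p : ℕ) [Fact p.Prime] (hp4 : p % 4 = 1) (d : ℤ)
    (hd : legendreSym p d = 1)
    (u : (ZMod p)ˣ) (hud : (u : ZMod p) = (d : ZMod p)) (hu : IsSquare u) :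
    Equiv.Perm.sign (piP p u hu) =
      if ∃ y : ZMod p, y ^ 4 = (d : ZMod p) then 1 else -1 := by
  classical
  have hp : p.Prime := Fact.out
  have hp5 : 5 ≤ p := by
    have := hp.two_le
    rcases Nat.lt_or_ge p 5 with h | h
    · interval_cases p <;> omega
    · exact h
  -- -1 is a square unit
  have hneg1 : IsSquare (-1 : (ZMod p)ˣ) := by
    have h1 : IsSquare (-1 : ZMod p) := (ZMod.exists_sq_eq_neg_one_iff).mpr (by omega)
    obtain ⟨r, hr⟩ := h1
    haveI : Fact (1 < p) := ⟨hp.one_lt⟩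
    have hr0 : r ≠ 0 := by
      rintro rfl
      rw [mul_zero] at hr
      exact one_ne_zero (neg_eq_zero.mp hr)
    refine ⟨Units.mk0 r hr0, ?_⟩
    ext
    simpa using hr
  -- The square subgroup is cyclic, get a generator
  obtain ⟨g, hg⟩ := IsCyclic.exists_generator (α := Sqsub p)
  set N := Fintype.card (Sqsub p) with hN
  have hordg : orderOf g = N := by
    rw [hN, ← Nat.card_eq_fintype_card]
    exact orderOf_eq_card_of_forall_mem_zpowers hg
  -- N is even since -1 has order 2 in the square subgroup
  have hm1ne : (-1 : (ZMod p)ˣ) ≠ 1 := by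
    intro h
    have h1 : ((-1 : (ZMod p)ˣ) : ZMod p) = ((1 : (ZMod p)ˣ) : ZMod p) := congrArg Units.val h
    rw [Units.val_neg, Units.val_one] at h1
    have h2 : (2 : ZMod p) = 0 := by linear_combination -h1
    have h3 : p ∣ 2 := (CharP.cast_eq_zero_iff (ZMod p) p 2).mp (by exact_mod_cast h2)
    have := Nat.le_of_dvd (by norm_num) h3
    omega
  have hord2 : orderOf ((⟨-1, hneg1⟩ : Sqsub p)) = 2 := by
    rw [← Subgroup.orderOf_coe]
    show orderOf (-1 : (ZMod p)ˣ) = 2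
    refine orderOf_eq_prime ?_ hm1ne
    ext; simp
  have hNeven : Even N := by
    have := orderOf_dvd_card (x := (⟨-1, hneg1⟩ : Sqsub p))
    rw [hord2] at this
    exact (even_iff_two_dvd).mpr (hN ▸ this)
  -- u as element of the subgroup and as a power of g
  set U : Sqsub p := ⟨u, hu⟩ with hU
  obtain ⟨k, hk0⟩ : U ∈ Submonoid.powers g := by
    rw [mem_powers_iff_mem_zpowers]; exact hg U
  have hk : g ^ k = U := hk0
  -- facts about Phi g
  have hfix : ∀ x : {x : (ZMod p)ˣ // IsSquare x}, (Phi p g) x ≠ x := by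
    intro x hx
    have hgx : (g : (ZMod p)ˣ) * x = x := congrArg Subtype.val hx
    have hg1 : (g : (ZMod p)ˣ) = 1 := by
      have := mul_right_cancel (b := (x : (ZMod p)ˣ)) (a := (g : (ZMod p)ˣ)) (c := 1)
      exact this (by rw [one_mul]; exact hgx)
    have hgone : g = 1 := Subtype.ext hg1
    have hN1 : N = 1 := by rw [← hordg, hgone, orderOf_one]
    rw [hN1] at hNeven
    exact Nat.not_even_one hNeven
  have hzpow : ∀ (m : ℤ) (x : {x : (ZMod p)ˣ // IsSquare x}),
      ((Phi p g) ^ m) x = ⟨((g ^ m : Sqsub p) : (ZMod p)ˣ) * x, ((g ^ m : Sqsub p)).2.mul x.2⟩ := by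
    intro m x
    rw [← map_zpow]
    rfl
  have hcycle : (Phi p g).IsCycle := by
    refine ⟨⟨1, IsSquare.one⟩, hfix _, ?_⟩
    intro y _
    obtain ⟨m, hm0⟩ := hg ⟨y.1, y.2⟩
    have hm : g ^ m = ⟨y.1, y.2⟩ := hm0
    refine ⟨m, ?_⟩
    rw [hzpow]
    apply Subtype.ext
    show ((g ^ m : Sqsub p) : (ZMod p)ˣ) * 1 = y.1
    rw [mul_one, hm]
  have hsupp : (Phi p g).support = Finset.univ := by
    apply Finset.eq_univ_iff_forall.mpr
    intro x
    exact Equiv.Perm.mem_support.mpr (hfix x)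
  have hcardS : Fintype.card {x : (ZMod p)ˣ // IsSquare x} = N := by
    rw [hN]
    exact Fintype.card_congr (Equiv.subtypeEquivRight fun _ => Iff.rfl).symm
  have hsigng : Equiv.Perm.sign (Phi p g) = -1 := by
    rw [hcycle.sign, hsupp]
    rw [Finset.card_univ, hcardS, hNeven.neg_one_pow]
  have hsignu : Equiv.Perm.sign (piP p u hu) = (-1) ^ k := by
    have h1 : piP p u hu = Phi p U := rfl
    rw [h1, ← hk, map_pow, map_pow, hsigng]
  -- fourth power condition iff k even
  have hd0 : (d : ZMod p) ≠ 0 := by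
    rw [← hud]
    exact Units.ne_zero u
  have hfourth : (∃ y : ZMod p, y ^ 4 = (d : ZMod p)) ↔ Even k := by
    constructor
    · rintro ⟨y, hy⟩
      have hy0 : y ≠ 0 := by
        rintro rfl
        rw [zero_pow (by norm_num)] at hy
        exact hd0 hy.symm
      have hw4 : (Units.mk0 y hy0) ^ 4 = u := by
        ext
        rw [Units.val_pow_eq_pow_val]
        show y ^ 4 = (u : ZMod p)
        rw [hy, hud]
      set w : (ZMod p)ˣ := Units.mk0 y hy0 with hw
      set W : Sqsub p := ⟨w ^ 2, ⟨w, sq w⟩⟩ with hW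
      have hW2 : W ^ 2 = U := by
        apply Subtype.ext
        show (w ^ 2) ^ 2 = u
        rw [← pow_mul]
        exact hw4
      obtain ⟨j, hj0⟩ : W ∈ Submonoid.powers g := by
        rw [mem_powers_iff_mem_zpowers]; exact hg W
      have hj : g ^ j = W := hj0
      have hgk : g ^ k = g ^ (2 * j) := by
        rw [hk, ← hW2, ← hj, ← pow_mul, mul_comm]
      have hmod : k ≡ 2 * j [MOD N] := by
        rw [← hordg]
        exact (pow_eq_pow_iff_modEq).mp hgk
      have h2N : (2:ℕ) ∣ N := even_iff_two_dvd.mp hNeven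
      have hmod2 : k ≡ 2 * j [MOD 2] := hmod.of_dvd h2N
      have : k % 2 = 0 := by
        have := hmod2
        unfold Nat.ModEq at this
        omega
      exact Nat.even_iff.mpr this
    · rintro ⟨m, rfl⟩
      obtain ⟨t, ht⟩ := g.2
      refine ⟨((t ^ m : (ZMod p)ˣ) : ZMod p), ?_⟩
      have h1 : u = (g : (ZMod p)ˣ) ^ (m + m) := by
        rw [← SubmonoidClass.coe_pow, hk]
      have huval : u = (t ^ m) ^ 4 := by
        rw [h1, ht, ← sq, ← pow_mul, ← pow_mul]
        congr 1
        omega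
      rw [← hud, huval, ← Units.val_pow_eq_pow_val]
  by_cases hcase : ∃ y : ZMod p, y ^ 4 = (d : ZMod p)
  · rw [if_pos hcase, hsignu, (hfourth.mp hcase).neg_one_pow]
  · rw [if_neg hcase, hsignu]
    have hodd : Odd k := Nat.odd_iff.mpr (by
      have := fun h => hcase (hfourth.mpr h)
      rcases Nat.even_or_odd k with he | ho
      · exact absurd he this
      · exact Nat.odd_iff.mp ho)
    exact hodd.neg_one_pow
end

section
/- Let p ≡ 1 (mod 4) be a prime, n = (p-1)/2, and d a quadratic residue modulo p. Then sgn(π_p(d)) ≡ d^((p-1)/4) (mod p). -/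
open scoped Classical

lemma piP_pow (p : ℕ) [Fact p.Prime] (u : (ZMod p)ˣ) (hu : IsSquare u) (k : ℕ)
    (x : {x : (ZMod p)ˣ // IsSquare x}) :
    (((piP p u hu ^ k) x : {x : (ZMod p)ˣ // IsSquare x}) : (ZMod p)ˣ) = u ^ k * (x : (ZMod p)ˣ) := by
  induction k with
  | zero => simp
  | succ k ih =>
    rw [pow_succ', Equiv.Perm.mul_apply]
    show (u : (ZMod p)ˣ) * _ = _
    rw [ih, pow_succ', mul_assoc]

theorem stmt1 (p : ℕ) [Fact p.Prime] (hp4 : p % 4 = 1) (d : ℤ)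
    (hd : legendreSym p d = 1)
    (u : (ZMod p)ˣ) (hud : (u : ZMod p) = (d : ZMod p)) (hu : IsSquare u) :
    ((Equiv.Perm.sign (piP p u hu) : ℤ) : ZMod p) = (d : ZMod p) ^ ((p - 1) / 4) := by
  have hp := (Fact.out : p.Prime)
  -- arithmetic setup
  obtain ⟨t, ht⟩ : ∃ t, p - 1 = 4 * t := by
    have : 4 ∣ p - 1 := by omega
    exact this
  have hp5 : 5 ≤ p := by
    have := hp.two_le
    omega
  have ht1 : 1 ≤ t := by omega
  have ht4 : (p - 1) / 4 = t := by omega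
  -- generator
  obtain ⟨g₀, hg₀⟩ := IsCyclic.exists_generator (α := (ZMod p)ˣ)
  have hordg₀ : orderOf g₀ = p - 1 := by
    rw [orderOf_eq_card_of_forall_mem_zpowers hg₀, Nat.card_eq_fintype_card, ZMod.card_units]
  set g : (ZMod p)ˣ := g₀ ^ 2 with hgdef
  have hg : IsSquare g := ⟨g₀, sq g₀⟩
  have hordg : orderOf g = 2 * t := by
    rw [hgdef, orderOf_pow, hordg₀, ht]
    have : Nat.gcd (4 * t) 2 = 2 := Nat.gcd_eq_right ⟨2 * t, by ring⟩
    rw [this]; omega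
  have hgne1 : g ≠ 1 := by
    intro h
    rw [h, orderOf_one] at hordg
    omega
  -- every square is a power of g
  have hsq : ∀ x : (ZMod p)ˣ, IsSquare x → ∃ k : ℕ, g ^ k = x := by
    intro x ⟨y, hy⟩
    obtain ⟨m, hm⟩ := mem_powers_iff_mem_zpowers.2 (hg₀ y)
    simp only at hm
    exact ⟨m, by rw [hgdef, ← pow_mul, mul_comm 2 m, pow_mul, hm, hy, sq]⟩
  -- g ^ t = -1
  have hgt : ((g : ZMod p)) ^ t = -1 := by
    have h2 : (((g : ZMod p)) ^ t) ^ 2 = 1 := by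
      rw [← Units.val_pow_eq_pow_val, ← Units.val_pow_eq_pow_val, ← pow_mul, mul_comm,
        ← hordg, pow_orderOf_eq_one, Units.val_one]
    have hne : ((g : ZMod p)) ^ t ≠ 1 := by
      intro h
      have : g ^ t = 1 := Units.ext (by push_cast; rw [h])
      have := orderOf_dvd_of_pow_eq_one this
      rw [hordg] at this
      have := Nat.le_of_dvd (by omega) this
      omega
    rcases sq_eq_one_iff.1 h2 with h | h
    · exact absurd h hne
    · exact h
  -- the permutation by g is a cycle
  have hne : ∀ x : {x : (ZMod p)ˣ // IsSquare x}, piP p g hg x ≠ x := by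
    intro x h
    apply hgne1
    have : (g : (ZMod p)ˣ) * (x : (ZMod p)ˣ) = (x : (ZMod p)ˣ) := congrArg Subtype.val h
    exact mul_eq_right.1 this
  have hcycle : (piP p g hg).IsCycle := by
    refine ⟨⟨1, IsSquare.one⟩, hne _, fun y _ => ?_⟩
    obtain ⟨k, hk⟩ := hsq y.1 y.2
    exact ⟨(k : ℤ), by
      rw [zpow_natCast]
      apply Subtype.ext
      rw [piP_pow]
      simp [hk]⟩
  have hsupport : (piP p g hg).support = Finset.univ := by
    ext x; simp [Equiv.Perm.mem_support, hne x]
  have hcardS : Fintype.card {x : (ZMod p)ˣ // IsSquare x} = 2 * t := by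
    have hiff : ∀ x : (ZMod p)ˣ, IsSquare x ↔ x ∈ Subgroup.zpowers g := by
      intro x
      constructor
      · intro hx
        obtain ⟨k, hk⟩ := hsq x hx
        exact ⟨(k : ℤ), by show g ^ (k : ℤ) = x; rw [zpow_natCast]; exact hk⟩
      · rintro ⟨k, rfl⟩
        exact ⟨g₀ ^ k, by show g ^ k = _; rw [hgdef, sq, mul_zpow]⟩
    rw [Fintype.card_congr (Equiv.subtypeEquivRight hiff)]
    rw [Fintype.card_zpowers, hordg]
  have hsigng : Equiv.Perm.sign (piP p g hg) = -1 := by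
    rw [hcycle.sign, hsupport]
    rw [show (Finset.univ : Finset {x : (ZMod p)ˣ // IsSquare x}).card
        = Fintype.card {x : (ZMod p)ˣ // IsSquare x} from rfl, hcardS]
    rw [pow_mul]
    simp
  -- u = g ^ k
  obtain ⟨k, hk⟩ := hsq u hu
  have hperm : piP p u hu = (piP p g hg) ^ k := by
    apply Equiv.ext
    intro x
    apply Subtype.ext
    rw [piP_pow, hk]
    rfl
  have hsign : Equiv.Perm.sign (piP p u hu) = (-1) ^ k := by
    rw [hperm, map_pow, hsigng]
  rw [hsign, ht4, ← hud]
  have : ((u : ZMod p)) ^ t = (-1) ^ k := by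
    rw [← hk]
    push_cast
    rw [← pow_mul, mul_comm k t, pow_mul, hgt]
  rw [this]
  push_cast
  ring
end

section
/- Let p be an odd prime, n = (p-1)/2, χ a multiplicative character modulo p, and define the vector v = (χ(1^2), χ(2^2), ..., χ(n^2))^T. Then the matrix M_p = [((i^2+j^2)/p)]_{1≤i,j≤n} (Legendre symbol entries) satisfies M_p v = λ v, where λ = Σ_{j=1}^{n} ((1+j^2)/p) χ(j^2). -/
open Finset

section aux
variable {p : ℕ} [hp : Fact p.Prime]

private lemma two_n (hp2 : p ≠ 2) : 2 * ((p - 1) / 2) + 1 = p := by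
  have h1 := hp.out.two_le
  have h2 : p % 2 = 1 := Nat.odd_iff.mp (hp.out.odd_of_ne_two hp2)
  omega

private lemma e_ne_zero (hp2 : p ≠ 2) (j : Fin ((p - 1) / 2)) :
    (((j : ℕ) + 1 : ℕ) : ZMod p) ≠ 0 := by
  have hn := two_n (p := p) hp2
  have hj := j.isLt
  intro h
  rw [ZMod.natCast_eq_zero_iff] at h
  have := Nat.le_of_dvd (by omega) h
  omega

private lemma q_inj (hp2 : p ≠ 2) :
    Function.Injective (fun i : Fin ((p - 1) / 2) => ((((i : ℕ) + 1 : ℕ) : ZMod p)) ^ 2) := by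
  have hn := two_n (p := p) hp2
  intro a b h
  simp only at h
  have ha := a.isLt
  have hb := b.isLt
  have h2 : ((((a:ℕ)+1:ℕ) : ZMod p) - (((b:ℕ)+1:ℕ) : ZMod p)) *
      ((((a:ℕ)+1:ℕ) : ZMod p) + (((b:ℕ)+1:ℕ) : ZMod p)) = 0 := by
    rw [mul_comm, ← sq_sub_sq, h, sub_self]
  rcases mul_eq_zero.mp h2 with h3 | h3
  · have h4 : (((a:ℕ)+1:ℕ) : ZMod p) = (((b:ℕ)+1:ℕ) : ZMod p) := by
      linear_combination h3
    have := congrArg ZMod.val h4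
    rw [ZMod.val_cast_of_lt (by omega), ZMod.val_cast_of_lt (by omega)] at this
    exact Fin.ext (by omega)
  · exfalso
    have h4 : ((((a:ℕ)+1) + ((b:ℕ)+1) : ℕ) : ZMod p) = 0 := by
      push_cast at h3 ⊢; linear_combination h3
    rw [ZMod.natCast_eq_zero_iff] at h4
    have := Nat.le_of_dvd (by omega) h4
    omega

private lemma halfrep (hp2 : p ≠ 2) (u : ZMod p) (hu : u ≠ 0) :
    ∃ k : Fin ((p - 1) / 2), ((((k : ℕ) + 1 : ℕ) : ZMod p)) ^ 2 = u ^ 2 := by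
  have hn := two_n (p := p) hp2
  have hplt : 0 < p := by omega
  have hv : u.val < p := ZMod.val_lt u
  have hv1 : 0 < u.val := Nat.pos_of_ne_zero ((ZMod.val_ne_zero u).mpr hu)
  have hcast : ((u.val : ℕ) : ZMod p) = u := by
    simp [ZMod.natCast_val, ZMod.cast_id]
  by_cases hle : u.val ≤ (p - 1) / 2
  · refine ⟨⟨u.val - 1, by omega⟩, ?_⟩
    have : (u.val - 1) + 1 = u.val := by omega
    simp only [this, hcast]
  · refine ⟨⟨(p - u.val) - 1, by omega⟩, ?_⟩
    have h1 : ((p - u.val) - 1) + 1 = p - u.val := by omega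
    have h2 : (((p - u.val : ℕ)) : ZMod p) = -u := by
      have : ((p - u.val : ℕ) : ZMod p) = (p : ZMod p) - (u.val : ZMod p) := by
        rw [Nat.cast_sub (by omega)]
      rw [this, hcast, ZMod.natCast_self, zero_sub]
    simp only [h1, h2, neg_sq]

private lemma sum_sq_mul (hp2 : p ≠ 2) (c : ZMod p) (hc : c ≠ 0) (f : ZMod p → ℂ) :
    ∑ j : Fin ((p - 1) / 2), f (c ^ 2 * ((((j : ℕ) + 1 : ℕ) : ZMod p)) ^ 2) =
    ∑ j : Fin ((p - 1) / 2), f (((((j : ℕ) + 1 : ℕ) : ZMod p)) ^ 2) := by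
  set q : Fin ((p - 1) / 2) → ZMod p := fun j => ((((j : ℕ) + 1 : ℕ) : ZMod p)) ^ 2 with hq
  have hqi : Function.Injective q := q_inj hp2
  have hc2 : c ^ 2 ≠ 0 := pow_ne_zero 2 hc
  have hgi : Function.Injective (fun j => c ^ 2 * q j) :=
    fun a b h => hqi (mul_left_cancel₀ hc2 h)
  have hAB : (univ.image fun j => c ^ 2 * q j) = univ.image q := by
    apply Finset.eq_of_subset_of_card_le
    · intro x hx
      simp only [Finset.mem_image, Finset.mem_univ, true_and] at hx ⊢
      obtain ⟨j, rfl⟩ := hx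
      have h1 : c ^ 2 * q j = (c * (((j : ℕ) + 1 : ℕ) : ZMod p)) ^ 2 := by
        rw [hq]; ring
      have h2 : c * (((j : ℕ) + 1 : ℕ) : ZMod p) ≠ 0 :=
        mul_ne_zero hc (e_ne_zero hp2 j)
      obtain ⟨k, hk⟩ := halfrep hp2 _ h2
      exact ⟨k, by rw [h1, hq]; exact hk⟩
    · rw [Finset.card_image_of_injective _ hqi, Finset.card_image_of_injective _ hgi]
  calc ∑ j : Fin ((p - 1) / 2), f (c ^ 2 * q j)
      = ∑ x ∈ univ.image (fun j => c ^ 2 * q j), f x :=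
        (Finset.sum_image fun a _ b _ h => hgi h).symm
    _ = ∑ x ∈ univ.image q, f x := by rw [hAB]
    _ = ∑ j : Fin ((p - 1) / 2), f (q j) := Finset.sum_image fun a _ b _ h => hqi h

end aux

theorem stmt3 (p : ℕ) [Fact p.Prime] (hp2 : p ≠ 2) (χ : MulChar (ZMod p) ℂ) :
    (Matrix.of fun i j : Fin ((p - 1) / 2) =>
        ((legendreSym p (((i : ℤ) + 1) ^ 2 + ((j : ℤ) + 1) ^ 2) : ℤ) : ℂ)).mulVec
      (fun i : Fin ((p - 1) / 2) => χ ((((i : ℕ) + 1 : ℕ) : ZMod p) ^ 2)) =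
    (∑ j ∈ Finset.Icc 1 ((p - 1) / 2),
        ((legendreSym p (1 + (j : ℤ) ^ 2) : ℤ) : ℂ) * χ (((j : ℕ) : ZMod p) ^ 2)) •
      (fun i : Fin ((p - 1) / 2) => χ ((((i : ℕ) + 1 : ℕ) : ZMod p) ^ 2)) := by
  have hn := two_n (p := p) hp2
  set L : ZMod p → ℂ := fun x => ((quadraticChar (ZMod p) x : ℤ) : ℂ) with hL
  have hLmul : ∀ a b : ZMod p, L (a * b) = L a * L b := by
    intro a b; simp only [hL, map_mul, Int.cast_mul]
  have hLsq : ∀ c : ZMod p, c ≠ 0 → L (c ^ 2) = 1 := by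
    intro c hc; simp only [hL, quadraticChar_sq_one' hc, Int.cast_one]
  -- rewrite legendreSym casts
  have hleg : ∀ a : ℤ, ((legendreSym p a : ℤ) : ℂ) = L ((a : ZMod p)) := by
    intro a; rfl
  -- RHS sum over Icc to Fin sum
  have hRHS : (∑ j ∈ Finset.Icc 1 ((p - 1) / 2),
        ((legendreSym p (1 + (j : ℤ) ^ 2) : ℤ) : ℂ) * χ (((j : ℕ) : ZMod p) ^ 2)) =
      ∑ j : Fin ((p - 1) / 2),
        L (1 + ((((j : ℕ) + 1 : ℕ) : ZMod p)) ^ 2) * χ (((((j : ℕ) + 1 : ℕ) : ZMod p)) ^ 2) := by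
    have hmap : Finset.Icc 1 ((p - 1) / 2) =
        Finset.map ⟨fun x => x + 1, add_left_injective 1⟩ (Finset.range ((p - 1) / 2)) := by
      ext x
      simp only [Finset.mem_Icc, Finset.mem_map, Finset.mem_range, Function.Embedding.coeFn_mk]
      constructor
      · rintro ⟨h1, h2⟩; exact ⟨x - 1, by omega, by omega⟩
      · rintro ⟨y, hy, rfl⟩; omega
    rw [hmap, Finset.sum_map, ← Fin.sum_univ_eq_sum_range]
    refine Finset.sum_congr rfl fun j _ => ?_
    simp only [Function.Embedding.coeFn_mk]
    rw [hleg]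
    congr 2
    push_cast; ring
  funext i
  simp only [Matrix.mulVec, Matrix.of_apply, dotProduct, Pi.smul_apply, smul_eq_mul, hRHS]
  set c : ZMod p := (((i : ℕ) + 1 : ℕ) : ZMod p) with hcdef
  have hc : c ≠ 0 := e_ne_zero hp2 i
  have hLHS : ∀ j : Fin ((p - 1) / 2),
      ((legendreSym p (((i : ℤ) + 1) ^ 2 + ((j : ℤ) + 1) ^ 2) : ℤ) : ℂ) *
        χ (((((j : ℕ) + 1 : ℕ) : ZMod p)) ^ 2) =
      (fun x => L (c ^ 2 + x) * χ x) (((((j : ℕ) + 1 : ℕ) : ZMod p)) ^ 2) := by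
    intro j
    rw [hleg]
    congr 2
    push_cast [hcdef]
    ring
  calc ∑ j : Fin ((p - 1) / 2),
        ((legendreSym p (((i : ℤ) + 1) ^ 2 + ((j : ℤ) + 1) ^ 2) : ℤ) : ℂ) *
          χ (((((j : ℕ) + 1 : ℕ) : ZMod p)) ^ 2)
      = ∑ j : Fin ((p - 1) / 2),
          (fun x => L (c ^ 2 + x) * χ x) (((((j : ℕ) + 1 : ℕ) : ZMod p)) ^ 2) :=
        Finset.sum_congr rfl fun j _ => hLHS j
    _ = ∑ j : Fin ((p - 1) / 2),
          (fun x => L (c ^ 2 + x) * χ x) (c ^ 2 * ((((j : ℕ) + 1 : ℕ) : ZMod p)) ^ 2) :=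
        (sum_sq_mul hp2 c hc (fun x => L (c ^ 2 + x) * χ x)).symm
    _ = (∑ j : Fin ((p - 1) / 2),
          L (1 + ((((j : ℕ) + 1 : ℕ) : ZMod p)) ^ 2) *
            χ (((((j : ℕ) + 1 : ℕ) : ZMod p)) ^ 2)) * χ (c ^ 2) := by
        rw [Finset.sum_mul]
        refine Finset.sum_congr rfl fun j _ => ?_
        simp only
        have h1 : c ^ 2 + c ^ 2 * ((((j : ℕ) + 1 : ℕ) : ZMod p)) ^ 2 =
            c ^ 2 * (1 + ((((j : ℕ) + 1 : ℕ) : ZMod p)) ^ 2) := by ring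
        rw [h1, hLmul, hLsq c hc, one_mul, map_mul]
        ring
end

section
/- Let p = a^2 + 4b^2 be a prime with a, b integers and a ≡ 1 (mod 4), and n = (p-1)/2. Then Σ_{j=1}^{n} ((1+j^2)/p) · (j/p) = -a, where (·/p) is the Legendre symbol. -/
open Finset

namespace Stmt5Aux

variable (p : ℕ) [Fact p.Prime]

/-- The Jacobsthal-type sum. -/
def jsum (c : ZMod p) : ℤ :=
  ∑ x : ZMod p, quadraticChar (ZMod p) x * quadraticChar (ZMod p) (x ^ 2 + c)

lemma hchar (hp4 : p % 4 = 1) : ringChar (ZMod p) ≠ 2 := by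
  rw [ZMod.ringChar_zmod_n]; omega

lemma hp5 (hp4 : p % 4 = 1) : 5 ≤ p := by
  have := (Fact.out : p.Prime).two_le
  rcases Nat.lt_or_ge p 5 with h | h
  · interval_cases p <;> simp_all <;> omega
  · exact h

lemma chi_neg_one (hp4 : p % 4 = 1) : quadraticChar (ZMod p) (-1) = 1 := by
  rw [quadraticChar_neg_one (hchar p hp4), ZMod.card p, ZMod.χ₄_nat_one_mod_four hp4]

lemma lem_shift (hp4 : p % 4 = 1) (d : ZMod p) (hd : d ≠ 0) :
    ∑ x : ZMod p, quadraticChar (ZMod p) (x * (x + d)) = -1 := by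
  have h0 : ∑ x : ZMod p, quadraticChar (ZMod p) (x * (x + d)) =
      ∑ x ∈ Finset.univ.erase 0, quadraticChar (ZMod p) (x * (x + d)) := by
    rw [← Finset.add_sum_erase Finset.univ _ (Finset.mem_univ (0 : ZMod p))]
    simp
  rw [h0]
  have h1 : ∑ x ∈ Finset.univ.erase (0 : ZMod p), quadraticChar (ZMod p) (x * (x + d)) =
      ∑ y ∈ Finset.univ.erase (1 : ZMod p), quadraticChar (ZMod p) y := by
    refine Finset.sum_nbij' (fun x => 1 + d * x⁻¹) (fun y => d * (y - 1)⁻¹) ?_ ?_ ?_ ?_ ?_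
    · intro x hx
      have hx0 : x ≠ 0 := by simpa using (Finset.mem_erase.mp hx).1
      simp only [Finset.mem_erase, Finset.mem_univ, and_true]
      intro h
      have : d * x⁻¹ = 0 := by linear_combination h
      rcases mul_eq_zero.mp this with h' | h'
      · exact hd h'
      · exact hx0 (inv_eq_zero.mp h')
    · intro y hy
      have hy1 : y ≠ 1 := by simpa using (Finset.mem_erase.mp hy).1
      simp only [Finset.mem_erase, Finset.mem_univ, and_true]
      intro h
      rcases mul_eq_zero.mp h with h' | h'
      · exact hd h'
      · exact hy1 (by have := inv_eq_zero.mp h'; linear_combination this)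
    · intro x hx
      have hx0 : x ≠ 0 := by simpa using (Finset.mem_erase.mp hx).1
      field_simp
      rw [add_sub_cancel_left, div_self hd]
    · intro y hy
      have hy1 : y ≠ 1 := by simpa using (Finset.mem_erase.mp hy).1
      have hsub : y - 1 ≠ 0 := sub_ne_zero.mpr hy1
      field_simp
      ring
    · intro x hx
      have hx0 : x ≠ 0 := by simpa using (Finset.mem_erase.mp hx).1
      have hxx : x * (x + d) = x ^ 2 * (1 + d * x⁻¹) := by field_simp
      rw [hxx, map_mul, quadraticChar_sq_one' hx0, one_mul]
  rw [h1, ← Finset.add_sum_erase Finset.univ _ (Finset.mem_univ (1 : ZMod p))] at *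
  have := quadraticChar_sum_zero (hchar p hp4)
  rw [← Finset.add_sum_erase Finset.univ _ (Finset.mem_univ (1 : ZMod p))] at this
  simp only [map_one] at this ⊢
  linarith

lemma lem_g (hp4 : p % 4 = 1) (d : ZMod p) :
    ∑ x : ZMod p, quadraticChar (ZMod p) (x * (x + d)) =
      (if d = 0 then (p : ℤ) else 0) - 1 := by
  rcases eq_or_ne d 0 with rfl | hd
  · simp only [if_pos rfl, add_zero]
    have h : ∀ x : ZMod p, quadraticChar (ZMod p) (x * x) = if x = 0 then 0 else 1 := by
      intro x
      rcases eq_or_ne x 0 with rfl | hx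
      · simp
      · rw [if_neg hx, ← sq, quadraticChar_sq_one' hx]
    rw [Finset.sum_congr rfl fun x _ => h x, Finset.sum_ite, Finset.sum_const,
      Finset.sum_const, Finset.filter_ne']
    have hcard : (Finset.univ.erase (0 : ZMod p)).card = p - 1 := by
      rw [Finset.card_erase_of_mem (Finset.mem_univ _), Finset.card_univ, ZMod.card p]
    rw [hcard]
    have hp1 : 1 ≤ p := (Fact.out : p.Prime).one_lt.le
    simp only [smul_zero, nsmul_eq_mul, mul_one, zero_add, if_pos trivial]
    push_cast [hp1]
    ring
  · rw [if_neg hd, lem_shift p hp4 d hd]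
    ring

lemma lem_inner (hp4 : p % 4 = 1) (u v : ZMod p) :
    ∑ c : ZMod p, quadraticChar (ZMod p) ((u + c) * (v + c)) =
      (if u = v then (p : ℤ) else 0) - 1 := by
  have he : ∑ c : ZMod p, quadraticChar (ZMod p) (c * (c + (v - u))) =
      ∑ c : ZMod p, quadraticChar (ZMod p) ((u + c) * (v + c)) := by
    refine Fintype.sum_equiv (Equiv.subRight u) _ _ ?_
    intro x
    simp only [Equiv.subRight_apply]
    congr 1
    ring
  rw [← he, lem_g p hp4 (v - u)]
  congr 1
  rcases eq_or_ne u v with rfl | h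
  · rw [if_pos rfl, if_pos (sub_self u)]
  · rw [if_neg h, if_neg (fun hh => h (by linear_combination -hh))]

lemma lem_sum_sq (hp4 : p % 4 = 1) :
    ∑ c : ZMod p, jsum p c ^ 2 = 2 * p * (p - 1) := by
  have hp1 : 1 ≤ p := (Fact.out : p.Prime).one_lt.le
  have hexp : ∀ c : ZMod p, jsum p c ^ 2 = ∑ x : ZMod p, ∑ y : ZMod p,
      quadraticChar (ZMod p) x * quadraticChar (ZMod p) y *
        quadraticChar (ZMod p) ((x ^ 2 + c) * (y ^ 2 + c)) := by
    intro c
    rw [sq, jsum, Finset.sum_mul_sum]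
    refine Finset.sum_congr rfl fun x _ => Finset.sum_congr rfl fun y _ => ?_
    rw [map_mul]
    ring
  rw [Finset.sum_congr rfl fun c _ => hexp c, Finset.sum_comm]
  rw [Finset.sum_congr rfl fun x (_ : x ∈ Finset.univ) => Finset.sum_comm]
  have hin : ∀ x y : ZMod p, ∑ c : ZMod p,
      quadraticChar (ZMod p) x * quadraticChar (ZMod p) y *
        quadraticChar (ZMod p) ((x ^ 2 + c) * (y ^ 2 + c)) =
      (if x ^ 2 = y ^ 2 then quadraticChar (ZMod p) x * quadraticChar (ZMod p) y * p else 0)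
        - quadraticChar (ZMod p) x * quadraticChar (ZMod p) y := by
    intro x y
    rw [← Finset.mul_sum, lem_inner p hp4 (x ^ 2) (y ^ 2)]
    rcases eq_or_ne (x ^ 2) (y ^ 2) with h | h
    · rw [if_pos h, if_pos h]; ring
    · rw [if_neg h, if_neg h]; ring
  rw [Finset.sum_congr rfl fun x _ => Finset.sum_congr rfl fun y _ => hin x y]
  have hsplit : ∀ x : ZMod p, ∑ y : ZMod p,
      ((if x ^ 2 = y ^ 2 then quadraticChar (ZMod p) x * quadraticChar (ZMod p) y * p else 0)
        - quadraticChar (ZMod p) x * quadraticChar (ZMod p) y) =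
      (∑ y : ZMod p,
        (if x ^ 2 = y ^ 2 then quadraticChar (ZMod p) x * quadraticChar (ZMod p) y * p else 0))
        - quadraticChar (ZMod p) x * (∑ y : ZMod p, quadraticChar (ZMod p) y) := by
    intro x
    rw [Finset.sum_sub_distrib, Finset.mul_sum]
  rw [Finset.sum_congr rfl fun x _ => hsplit x, Finset.sum_sub_distrib]
  have hzero : ∑ x : ZMod p, quadraticChar (ZMod p) x *
      (∑ y : ZMod p, quadraticChar (ZMod p) y) = 0 := by
    rw [quadraticChar_sum_zero (hchar p hp4)]
    simp
  rw [hzero, sub_zero]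
  have hdiag : ∀ x : ZMod p,
      (∑ y : ZMod p,
        (if x ^ 2 = y ^ 2 then quadraticChar (ZMod p) x * quadraticChar (ZMod p) y * p else 0))
      = if x = 0 then (0 : ℤ) else 2 * (p : ℤ) := by
    intro x
    rcases eq_or_ne x 0 with rfl | hx
    · rw [if_pos rfl]
      refine Finset.sum_eq_zero fun y _ => ?_
      rcases eq_or_ne ((0 : ZMod p) ^ 2) (y ^ 2) with h | h
      · rw [if_pos h]; simp
      · rw [if_neg h]
    · rw [if_neg hx]
      have h2 : (2 : ZMod p) ≠ 0 := by
        have : ((2 : ℕ) : ZMod p) ≠ 0 := by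
          rw [Ne, ZMod.natCast_eq_zero_iff]
          intro h
          have h5 := hp5 p hp4
          have := Nat.le_of_dvd (by norm_num) h
          omega
        simpa using this
      have hne : x ≠ -x := by
        intro h
        have h' : (2 : ZMod p) * x = 0 := by linear_combination h
        rcases mul_eq_zero.mp h' with h'' | h''
        · exact h2 h''
        · exact hx h''
      have hmem : ∀ y : ZMod p, (x ^ 2 = y ^ 2) ↔ y ∈ ({x, -x} : Finset (ZMod p)) := by
        intro y
        rw [Finset.mem_insert, Finset.mem_singleton]
        constructor
        · intro h
          have h' : (y - x) * (y + x) = 0 := by linear_combination -h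
          rcases mul_eq_zero.mp h' with h'' | h''
          · left; linear_combination h''
          · right; linear_combination h''
        · rintro (rfl | rfl)
          · rfl
          · ring
      simp only [hmem]
      rw [Finset.sum_ite_mem, Finset.univ_inter, Finset.sum_pair hne]
      have hnegx : quadraticChar (ZMod p) (-x) = quadraticChar (ZMod p) x := by
        rw [show -x = -1 * x by ring, map_mul, chi_neg_one p hp4, one_mul]
      rw [hnegx]
      have hx2 : quadraticChar (ZMod p) x * quadraticChar (ZMod p) x = 1 := by
        rw [← sq, quadraticChar_sq_one hx]
      rw [hx2]
      push_cast
      ring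
  have hfin : ∑ x : ZMod p, (if x = 0 then (0 : ℤ) else 2 * (p : ℤ)) =
      ((p : ℤ) - 1) * (2 * (p : ℤ)) := by
    have h1 : ∀ x : ZMod p, (if x = 0 then (0 : ℤ) else 2 * (p : ℤ)) =
        2 * (p : ℤ) - (if x = 0 then 2 * (p : ℤ) else 0) := by
      intro x; split <;> ring
    rw [Finset.sum_congr rfl fun x _ => h1 x, Finset.sum_sub_distrib,
      Finset.sum_ite_eq' Finset.univ (0 : ZMod p) fun _ => 2 * (p : ℤ)]
    rw [Finset.sum_const, Finset.card_univ, ZMod.card p, if_pos (Finset.mem_univ _),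
      nsmul_eq_mul]
    ring
  rw [Finset.sum_congr rfl fun x _ => hdiag x, hfin]
  ring

lemma lem_scale (hp4 : p % 4 = 1) (s c : ZMod p) (hs : s ≠ 0) :
    jsum p (s ^ 2 * c) = quadraticChar (ZMod p) s * jsum p c := by
  unfold jsum
  rw [Finset.mul_sum]
  refine (Fintype.sum_equiv (Equiv.mulLeft₀ s hs) _ _ ?_).symm
  intro x
  simp only [Equiv.mulLeft₀_apply]
  have h1 : (s * x) ^ 2 + s ^ 2 * c = s ^ 2 * (x ^ 2 + c) := by ring
  rw [h1, map_mul, map_mul, quadraticChar_sq_one' hs]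
  ring

lemma lem_zero (hp4 : p % 4 = 1) : jsum p 0 = 0 := by
  unfold jsum
  have h : ∀ x : ZMod p, quadraticChar (ZMod p) x * quadraticChar (ZMod p) (x ^ 2 + 0) =
      quadraticChar (ZMod p) x := by
    intro x
    rcases eq_or_ne x 0 with rfl | hx
    · simp
    · rw [add_zero, quadraticChar_sq_one' hx, mul_one]
  rw [Finset.sum_congr rfl fun x _ => h x]
  exact quadraticChar_sum_zero (hchar p hp4)

lemma lem_4p (hp4 : p % 4 = 1) {r : ZMod p} (hr : quadraticChar (ZMod p) r = -1) :
    jsum p 1 ^ 2 + jsum p r ^ 2 = 4 * p := by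
  have hr0 : r ≠ 0 := by
    intro h
    rw [h] at hr
    simp at hr
  have hstep : ∀ c : ZMod p, c ≠ 0 →
      2 * jsum p c ^ 2 = (1 + quadraticChar (ZMod p) c) * jsum p 1 ^ 2
        + (1 - quadraticChar (ZMod p) c) * jsum p r ^ 2 := by
    intro c hc
    rcases quadraticChar_dichotomy hc with h | h
    · have hsq : IsSquare c := (quadraticChar_one_iff_isSquare hc).mp h
      obtain ⟨t, rfl⟩ := hsq
      have ht : t ≠ 0 := by rintro rfl; simp at hc
      have hj : jsum p (t * t) = quadraticChar (ZMod p) t * jsum p 1 := by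
        have h2 := lem_scale p hp4 t 1 ht
        rw [mul_one] at h2
        rw [← h2]
        congr 1
        ring
      rw [hj, h]
      have ht2 : quadraticChar (ZMod p) t ^ 2 = 1 := quadraticChar_sq_one ht
      linear_combination (2 * jsum p 1 ^ 2) * ht2
    · have hrinv : quadraticChar (ZMod p) r⁻¹ = -1 := by
        have h1 : quadraticChar (ZMod p) r * quadraticChar (ZMod p) r⁻¹ = 1 := by
          rw [← map_mul, mul_inv_cancel₀ hr0, map_one]
        rw [hr] at h1
        linarith
      have hcr0 : c * r⁻¹ ≠ 0 := mul_ne_zero hc (inv_ne_zero hr0)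
      have hcr : IsSquare (c * r⁻¹) := by
        apply (quadraticChar_one_iff_isSquare hcr0).mp
        rw [map_mul, h, hrinv]
        ring
      obtain ⟨t, ht2⟩ := hcr
      have ht : t ≠ 0 := by
        rintro rfl
        rw [mul_zero] at ht2
        exact hcr0 ht2
      have hc' : c = t ^ 2 * r := by
        have h3 : c * r⁻¹ * r = t * t * r := by rw [ht2]
        rw [inv_mul_cancel_right₀ hr0] at h3
        rw [h3]
        ring
      have hqc : quadraticChar (ZMod p) (t ^ 2 * r) = -1 := by
        rw [map_mul, quadraticChar_sq_one' ht, one_mul, hr]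
      rw [hc', lem_scale p hp4 t r ht, hqc]
      have ht3 : quadraticChar (ZMod p) t ^ 2 = 1 := quadraticChar_sq_one ht
      linear_combination (2 * jsum p r ^ 2) * ht3
  have hchisum : ∑ c ∈ Finset.univ.erase (0 : ZMod p), quadraticChar (ZMod p) c = 0 := by
    have h := quadraticChar_sum_zero (hchar p hp4)
    rw [← Finset.add_sum_erase Finset.univ _ (Finset.mem_univ (0 : ZMod p))] at h
    simpa using h
  have hjsumsq : ∑ c ∈ Finset.univ.erase (0 : ZMod p), jsum p c ^ 2 = 2 * p * (p - 1) := by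
    have h := lem_sum_sq p hp4
    rw [← Finset.add_sum_erase Finset.univ _ (Finset.mem_univ (0 : ZMod p)), lem_zero p hp4] at h
    simpa using h
  have hmain : ∑ c ∈ Finset.univ.erase (0 : ZMod p), (2 * jsum p c ^ 2) =
      ∑ c ∈ Finset.univ.erase (0 : ZMod p),
        ((jsum p 1 ^ 2 + jsum p r ^ 2) + quadraticChar (ZMod p) c * (jsum p 1 ^ 2 - jsum p r ^ 2)) := by
    refine Finset.sum_congr rfl fun c hc => ?_
    have hc0 : c ≠ 0 := (Finset.mem_erase.mp hc).1
    rw [hstep c hc0]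
    ring
  have hL : ∑ c ∈ Finset.univ.erase (0 : ZMod p), (2 * jsum p c ^ 2) =
      4 * (p : ℤ) * ((p : ℤ) - 1) := by
    rw [← Finset.mul_sum, hjsumsq]
    ring
  have hR : ∑ c ∈ Finset.univ.erase (0 : ZMod p),
      ((jsum p 1 ^ 2 + jsum p r ^ 2) +
        quadraticChar (ZMod p) c * (jsum p 1 ^ 2 - jsum p r ^ 2)) =
      ((p : ℤ) - 1) * (jsum p 1 ^ 2 + jsum p r ^ 2) := by
    rw [Finset.sum_add_distrib, ← Finset.sum_mul, hchisum, zero_mul, add_zero,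
      Finset.sum_const, Finset.card_erase_of_mem (Finset.mem_univ _), Finset.card_univ,
      ZMod.card p, nsmul_eq_mul]
    have hp1 : 1 ≤ p := (Fact.out : p.Prime).one_lt.le
    push_cast [hp1]
    ring
  have heq : ((p : ℤ) - 1) * (4 * (p : ℤ)) =
      ((p : ℤ) - 1) * (jsum p 1 ^ 2 + jsum p r ^ 2) := by
    rw [← hR, ← hmain, hL]
    ring
  have hp1 : ((p : ℤ) - 1) ≠ 0 := by
    have h5 := hp5 p hp4
    omega
  have := mul_left_cancel₀ hp1 heq
  linarith

lemma lem_even (hp4 : p % 4 = 1) {r : ZMod p} (hr : quadraticChar (ZMod p) r = -1) :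
    2 ∣ jsum p r := by
  have hr0 : r ≠ 0 := by
    intro h
    rw [h] at hr
    simp at hr
  have hne : ∀ x : ZMod p, x ^ 2 + r ≠ 0 := by
    intro x h
    rcases eq_or_ne x 0 with rfl | hx
    · rw [zero_pow two_ne_zero, zero_add] at h
      exact hr0 h
    · have hrx : r = -1 * x ^ 2 := by linear_combination h
      rw [hrx, map_mul, chi_neg_one p hp4, quadraticChar_sq_one' hx] at hr
      norm_num at hr
  have hsq : ∑ x : ZMod p, (quadraticChar (ZMod p) x * quadraticChar (ZMod p) (x ^ 2 + r)) ^ 2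
      = (p : ℤ) - 1 := by
    have h : ∀ x : ZMod p,
        (quadraticChar (ZMod p) x * quadraticChar (ZMod p) (x ^ 2 + r)) ^ 2 =
          if x = 0 then 0 else 1 := by
      intro x
      rcases eq_or_ne x 0 with rfl | hx
      · simp
      · rw [if_neg hx, mul_pow, quadraticChar_sq_one hx, quadraticChar_sq_one (hne x), mul_one]
    rw [Finset.sum_congr rfl fun x _ => h x, Finset.sum_ite, Finset.sum_const,
      Finset.sum_const, Finset.filter_ne']
    have hcard : (Finset.univ.erase (0 : ZMod p)).card = p - 1 := by
      rw [Finset.card_erase_of_mem (Finset.mem_univ _), Finset.card_univ, ZMod.card p]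
    rw [hcard]
    have hp1 : 1 ≤ p := (Fact.out : p.Prime).one_lt.le
    simp only [smul_zero, nsmul_eq_mul, mul_one, zero_add]
    push_cast [hp1]
    ring
  have hdvd : (2 : ℤ) ∣ (jsum p r - ((p : ℤ) - 1)) := by
    rw [← hsq, jsum, ← Finset.sum_sub_distrib]
    refine Finset.dvd_sum fun x _ => ?_
    have ht : quadraticChar (ZMod p) x * quadraticChar (ZMod p) (x ^ 2 + r) = 0 ∨
        quadraticChar (ZMod p) x * quadraticChar (ZMod p) (x ^ 2 + r) = 1 ∨
        quadraticChar (ZMod p) x * quadraticChar (ZMod p) (x ^ 2 + r) = -1 := by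
      rcases eq_or_ne x 0 with rfl | hx
      · left; simp
      · right
        rcases quadraticChar_dichotomy hx with h1 | h1 <;>
          rcases quadraticChar_dichotomy (hne x) with h2 | h2 <;>
            rw [h1, h2] <;> norm_num
    rcases ht with h | h | h <;> rw [h] <;> norm_num
  have hp41 : (2 : ℤ) ∣ ((p : ℤ) - 1) := by
    obtain ⟨m, hm⟩ : ∃ m, p = 4 * m + 1 := ⟨p / 4, by omega⟩
    exact ⟨2 * m, by push_cast [hm]; ring⟩
  have := dvd_add hdvd hp41
  simpa using this

lemma chi_cast (j : ℕ) :
    legendreSym p (1 + (j : ℤ) ^ 2) * legendreSym p (j : ℤ) =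
      quadraticChar (ZMod p) ((j : ZMod p)) *
        quadraticChar (ZMod p) (((j : ZMod p)) ^ 2 + 1) := by
  rw [legendreSym, legendreSym]
  have h1 : ((1 + (j : ℤ) ^ 2 : ℤ) : ZMod p) = ((j : ZMod p)) ^ 2 + 1 := by
    push_cast
    ring
  have h2 : (((j : ℤ) : ZMod p)) = (j : ZMod p) := by push_cast; rfl
  rw [h1, h2, mul_comm]

lemma hH (hp4 : p % 4 = 1) (x : ZMod p) :
    quadraticChar (ZMod p) (-x) * quadraticChar (ZMod p) ((-x) ^ 2 + 1) =
      quadraticChar (ZMod p) x * quadraticChar (ZMod p) (x ^ 2 + 1) := by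
  rw [neg_sq, show -x = -1 * x by ring, map_mul, chi_neg_one p hp4, one_mul]

lemma hHinv (hp4 : p % 4 = 1) (x : ZMod p) (hx : x ≠ 0) :
    quadraticChar (ZMod p) x⁻¹ * quadraticChar (ZMod p) ((x⁻¹) ^ 2 + 1) =
      quadraticChar (ZMod p) x * quadraticChar (ZMod p) (x ^ 2 + 1) := by
  have hinv : quadraticChar (ZMod p) x⁻¹ = quadraticChar (ZMod p) x := by
    have h1 : quadraticChar (ZMod p) x * quadraticChar (ZMod p) x⁻¹ = 1 := by
      rw [← map_mul, mul_inv_cancel₀ hx, map_one]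
    rcases quadraticChar_dichotomy hx with h | h <;> rw [h] at h1 ⊢ <;> linarith
  have hmul : (x⁻¹) ^ 2 * x ^ 2 = 1 := by rw [← mul_pow, inv_mul_cancel₀ hx, one_pow]
  have harg : (x⁻¹) ^ 2 + 1 = (x⁻¹) ^ 2 * (x ^ 2 + 1) := by
    rw [mul_add, hmul, mul_one]
    ring
  rw [hinv, harg, map_mul, quadraticChar_sq_one' (inv_ne_zero hx), one_mul]

lemma cast_mem_icc (j : ℕ) (hj : j ∈ Finset.Icc 1 (p - 1)) : (j : ZMod p) ≠ 0 := by
  rw [Finset.mem_Icc] at hj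
  rw [Ne, ZMod.natCast_eq_zero_iff]
  intro hdvd
  have h1 : 1 ≤ p := (Fact.out : p.Prime).one_lt.le
  have := Nat.le_of_dvd (by omega) hdvd
  omega

lemma val_bounds (x : ZMod p) (hx : x ≠ 0) : 1 ≤ x.val ∧ x.val ≤ p - 1 := by
  have h1 := ZMod.val_lt x
  have h2 : x.val ≠ 0 := fun h => hx ((ZMod.val_eq_zero x).mp h)
  omega

lemma lem_fold (hp4 : p % 4 = 1) :
    jsum p 1 = 2 * ∑ j ∈ Finset.Icc 1 ((p - 1) / 2),
        legendreSym p (1 + (j : ℤ) ^ 2) * legendreSym p (j : ℤ) := by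
  have h5 := hp5 p hp4
  set n := (p - 1) / 2 with hn
  have hpn : p = 2 * n + 1 := by omega
  have step1 : jsum p 1 = ∑ j ∈ Finset.Icc 1 (p - 1),
      quadraticChar (ZMod p) ((j : ZMod p)) *
        quadraticChar (ZMod p) (((j : ZMod p)) ^ 2 + 1) := by
    rw [jsum]
    have h0 : ∑ x : ZMod p, quadraticChar (ZMod p) x * quadraticChar (ZMod p) (x ^ 2 + 1) =
        ∑ x ∈ Finset.univ.erase 0,
          quadraticChar (ZMod p) x * quadraticChar (ZMod p) (x ^ 2 + 1) := by
      rw [← Finset.add_sum_erase Finset.univ _ (Finset.mem_univ (0 : ZMod p))]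
      simp
    rw [h0]
    refine Finset.sum_nbij' (fun x => x.val) (fun j => (j : ZMod p)) ?_ ?_ ?_ ?_ ?_
    · intro x hx
      have hx0 : x ≠ 0 := by simpa using (Finset.mem_erase.mp hx).1
      simp only [Finset.mem_Icc]
      have h1 := ZMod.val_lt x
      have h2 : x.val ≠ 0 := fun h => hx0 ((ZMod.val_eq_zero x).mp h)
      omega
    · intro j hj
      simpa using cast_mem_icc p j hj
    · intro x _
      exact ZMod.natCast_rightInverse x
    · intro j hj
      rw [Finset.mem_Icc] at hj
      exact ZMod.val_cast_of_lt (by omega)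
    · intro x _
      rw [ZMod.natCast_rightInverse x]
  rw [step1]
  have hsplit : Finset.Icc 1 (p - 1) = Finset.Ioc 0 (p - 1) := Finset.Icc_add_one_left_eq_Ioc 0 (p - 1)
  have hsum : ∑ j ∈ Finset.Ioc 0 n, (quadraticChar (ZMod p) ((j : ZMod p)) *
        quadraticChar (ZMod p) (((j : ZMod p)) ^ 2 + 1))
      + ∑ j ∈ Finset.Ioc n (p - 1), (quadraticChar (ZMod p) ((j : ZMod p)) *
        quadraticChar (ZMod p) (((j : ZMod p)) ^ 2 + 1))
      = ∑ j ∈ Finset.Ioc 0 (p - 1), (quadraticChar (ZMod p) ((j : ZMod p)) *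
        quadraticChar (ZMod p) (((j : ZMod p)) ^ 2 + 1)) :=
    Finset.sum_Ioc_consecutive _ (by omega) (by omega)
  have hrefl : ∑ j ∈ Finset.Ioc n (p - 1), (quadraticChar (ZMod p) ((j : ZMod p)) *
        quadraticChar (ZMod p) (((j : ZMod p)) ^ 2 + 1))
      = ∑ j ∈ Finset.Ioc 0 n, (quadraticChar (ZMod p) ((j : ZMod p)) *
        quadraticChar (ZMod p) (((j : ZMod p)) ^ 2 + 1)) := by
    refine Finset.sum_nbij' (fun j => p - j) (fun j => p - j) ?_ ?_ ?_ ?_ ?_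
    · intro j hj
      simp only [Finset.mem_Ioc] at hj ⊢
      omega
    · intro j hj
      simp only [Finset.mem_Ioc] at hj ⊢
      omega
    · intro j hj
      simp only [Finset.mem_Ioc] at hj
      show p - (p - j) = j
      omega
    · intro j hj
      simp only [Finset.mem_Ioc] at hj
      show p - (p - j) = j
      omega
    · intro j hj
      rw [Finset.mem_Ioc] at hj
      have hcast : ((p - j : ℕ) : ZMod p) = -(j : ZMod p) := by
        have hjp : j ≤ p := by omega
        push_cast [hjp]
        rw [ZMod.natCast_self]
        ring
      rw [hcast, hH p hp4]
  have hterm : ∀ j : ℕ, quadraticChar (ZMod p) ((j : ZMod p)) *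
      quadraticChar (ZMod p) (((j : ZMod p)) ^ 2 + 1) =
      legendreSym p (1 + (j : ℤ) ^ 2) * legendreSym p (j : ℤ) :=
    fun j => (chi_cast p j).symm
  have hIcc : Finset.Icc 1 n = Finset.Ioc 0 n := Finset.Icc_add_one_left_eq_Ioc 0 n
  rw [hsplit, ← hsum, hrefl, hIcc]
  rw [Finset.sum_congr rfl fun j _ => hterm j]
  ring

lemma sum_invol (s : Finset ℕ) (σ : ℕ → ℕ) (g : ℕ → ℤ)
    (hmem : ∀ j ∈ s, σ j ∈ s) (hinv : ∀ j ∈ s, σ (σ j) = j)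
    (hg : ∀ j ∈ s, g (σ j) = g j) :
    ∑ j ∈ s, g j = 2 * ∑ j ∈ s.filter (fun j => j < σ j), g j
      + ∑ j ∈ s.filter (fun j => σ j = j), g j := by
  classical
  have hsplit1 := Finset.sum_filter_add_sum_filter_not s (fun j => σ j = j) g
  have hsplit2 := Finset.sum_filter_add_sum_filter_not
    (s.filter (fun j => ¬σ j = j)) (fun j => j < σ j) g
  rw [Finset.filter_filter, Finset.filter_filter] at hsplit2
  have he1 : s.filter (fun j => ¬σ j = j ∧ j < σ j) = s.filter (fun j => j < σ j) :=
    Finset.filter_congr fun j _ => ⟨fun h => h.2, fun h => ⟨by omega, h⟩⟩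
  have he2 : s.filter (fun j => ¬σ j = j ∧ ¬j < σ j) = s.filter (fun j => σ j < j) :=
    Finset.filter_congr fun j _ => ⟨fun h => by omega, fun h => ⟨by omega, by omega⟩⟩
  rw [he1, he2] at hsplit2
  have hbij : ∑ j ∈ s.filter (fun j => σ j < j), g j
      = ∑ j ∈ s.filter (fun j => j < σ j), g j := by
    refine Finset.sum_nbij' σ σ ?_ ?_ ?_ ?_ ?_
    · intro j hj
      simp only [Finset.mem_filter] at hj ⊢
      exact ⟨hmem j hj.1, by rw [hinv j hj.1]; exact hj.2⟩
    · intro j hj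
      simp only [Finset.mem_filter] at hj ⊢
      exact ⟨hmem j hj.1, by rw [hinv j hj.1]; exact hj.2⟩
    · intro j hj
      exact hinv j (Finset.mem_filter.mp hj).1
    · intro j hj
      exact hinv j (Finset.mem_filter.mp hj).1
    · intro j hj
      exact (hg j (Finset.mem_filter.mp hj).1).symm
  linarith

lemma sum_pm (t : Finset ℕ) (g : ℕ → ℤ) (h : ∀ j ∈ t, g j = 1 ∨ g j = -1) :
    (2 : ℤ) ∣ (∑ j ∈ t, g j - (t.card : ℤ)) := by
  have hc : ((t.card : ℤ)) = ∑ j ∈ t, (1 : ℤ) := by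
    rw [Finset.sum_const, nsmul_eq_mul, mul_one]
  rw [hc, ← Finset.sum_sub_distrib]
  refine Finset.dvd_sum fun j hj => ?_
  rcases h j hj with h' | h' <;> rw [h'] <;> norm_num

lemma lem_mod4 (hp4 : p % 4 = 1) :
    (∑ j ∈ Finset.Icc 1 ((p - 1) / 2),
        legendreSym p (1 + (j : ℤ) ^ 2) * legendreSym p (j : ℤ)) % 4 = 3 := by
  have h5 := hp5 p hp4
  haveI : Fact (1 < p) := ⟨by omega⟩
  set n := (p - 1) / 2 with hn
  have hpn : p = 2 * n + 1 := by omega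
  set g : ℕ → ℤ := fun j => legendreSym p (1 + (j : ℤ) ^ 2) * legendreSym p (j : ℤ) with hg
  set σ : ℕ → ℕ := fun j =>
    if ((j : ZMod p)⁻¹).val ≤ n then ((j : ZMod p)⁻¹).val else p - ((j : ZMod p)⁻¹).val with hσ
  have hσval : ∀ m : ℕ, σ m =
      if ((m : ZMod p)⁻¹).val ≤ n then ((m : ZMod p)⁻¹).val else p - ((m : ZMod p)⁻¹).val :=
    fun m => rfl
  have hjne : ∀ j ∈ Finset.Icc 1 n, (j : ZMod p) ≠ 0 := by
    intro j hj
    rw [Finset.mem_Icc] at hj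
    apply cast_mem_icc p j
    rw [Finset.mem_Icc]
    omega
  have hval_j : ∀ j ∈ Finset.Icc 1 n, ((j : ZMod p)).val = j := by
    intro j hj
    rw [Finset.mem_Icc] at hj
    exact ZMod.val_cast_of_lt (by omega)
  have hkey : ∀ j ∈ Finset.Icc 1 n, σ j ∈ Finset.Icc 1 n ∧
      ((σ j : ZMod p) = ((j : ZMod p))⁻¹ ∨ (σ j : ZMod p) = -((j : ZMod p))⁻¹) := by
    intro j hj
    have hj0 := hjne j hj
    have hi0 : ((j : ZMod p))⁻¹ ≠ 0 := inv_ne_zero hj0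
    obtain ⟨hv1, hv2⟩ := val_bounds p _ hi0
    rw [hσval j]
    by_cases hle : (((j : ZMod p))⁻¹).val ≤ n
    · rw [if_pos hle]
      refine ⟨by rw [Finset.mem_Icc]; omega, Or.inl (ZMod.natCast_rightInverse _)⟩
    · rw [if_neg hle]
      refine ⟨by rw [Finset.mem_Icc]; omega, Or.inr ?_⟩
      have hc : ((p - (((j : ZMod p))⁻¹).val : ℕ) : ZMod p)
          = -(((((j : ZMod p))⁻¹).val : ℕ) : ZMod p) := by
        push_cast [show (((j : ZMod p))⁻¹).val ≤ p by omega]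
        rw [ZMod.natCast_self]
        ring
      rw [hc, ZMod.natCast_rightInverse _]
  have hinvol : ∀ j ∈ Finset.Icc 1 n, σ (σ j) = j := by
    intro j hj
    obtain ⟨hmem, hcast⟩ := hkey j hj
    have hj0 := hjne j hj
    have hvj := hval_j j hj
    have hb := Finset.mem_Icc.mp hj
    rw [hσval (σ j)]
    rcases hcast with h | h
    · have hv : (((σ j : ZMod p))⁻¹).val = j := by
        rw [h, inv_inv, hvj]
      rw [hv, if_pos (by omega)]
    · have hv : (((σ j : ZMod p))⁻¹).val = p - j := by
        rw [h, inv_neg, inv_inv, ZMod.neg_val, if_neg hj0, hvj]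
      rw [hv, if_neg (by omega)]
      omega
  have hgs : ∀ j ∈ Finset.Icc 1 n, g (σ j) = g j := by
    intro j hj
    obtain ⟨hmem, hcast⟩ := hkey j hj
    have hj0 := hjne j hj
    show legendreSym p (1 + ((σ j : ℕ) : ℤ) ^ 2) * legendreSym p ((σ j : ℕ) : ℤ)
      = legendreSym p (1 + (j : ℤ) ^ 2) * legendreSym p (j : ℤ)
    rw [chi_cast, chi_cast]
    rcases hcast with h | h
    · rw [h]
      exact hHinv p hp4 _ hj0
    · rw [h, hH p hp4 (((j : ZMod p))⁻¹)]
      exact hHinv p hp4 _ hj0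
  -- the special point j₀ with j₀² = -1
  obtain ⟨i, hi⟩ : IsSquare (-1 : ZMod p) := ZMod.exists_sq_eq_neg_one_iff.mpr (by omega)
  have hi2 : i ^ 2 = -1 := by rw [sq]; exact hi.symm
  have hi0 : i ≠ 0 := by
    intro h
    rw [h] at hi2
    rw [zero_pow two_ne_zero] at hi2
    have h1 : (1 : ZMod p) = 0 := by linear_combination hi2
    exact one_ne_zero h1
  set j₀ := if i.val ≤ n then i.val else p - i.val with hj₀
  obtain ⟨hiv1, hiv2⟩ := val_bounds p i hi0
  have hj₀cast : (j₀ : ZMod p) = i ∨ (j₀ : ZMod p) = -i := by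
    rw [hj₀]
    by_cases hle : i.val ≤ n
    · rw [if_pos hle]
      exact Or.inl (ZMod.natCast_rightInverse _)
    · rw [if_neg hle]
      refine Or.inr ?_
      have hc : ((p - i.val : ℕ) : ZMod p) = -((i.val : ℕ) : ZMod p) := by
        push_cast [show i.val ≤ p by omega]
        rw [ZMod.natCast_self]
        ring
      rw [hc, ZMod.natCast_rightInverse _]
  have hj₀sq : ((j₀ : ZMod p)) ^ 2 = -1 := by
    rcases hj₀cast with h | h <;> rw [h]
    · exact hi2
    · rw [neg_sq]; exact hi2
  have hj₀mem : j₀ ∈ Finset.Icc 1 n := by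
    rw [hj₀]
    by_cases hle : i.val ≤ n
    · rw [if_pos hle, Finset.mem_Icc]; omega
    · rw [if_neg hle, Finset.mem_Icc]; omega
  have hb₀ := Finset.mem_Icc.mp hj₀mem
  have huniq : ∀ j ∈ Finset.Icc 1 n, ((j : ZMod p)) ^ 2 = -1 → j = j₀ := by
    intro j hj hsq
    have hvj := hval_j j hj
    have hb := Finset.mem_Icc.mp hj
    have hpm : (j : ZMod p) = i ∨ (j : ZMod p) = -i := by
      have h' : ((j : ZMod p) - i) * ((j : ZMod p) + i) = 0 := by
        linear_combination hsq - hi2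
      rcases mul_eq_zero.mp h' with h | h
      · exact Or.inl (by linear_combination h)
      · exact Or.inr (by linear_combination h)
    rcases hpm with h | h
    · have hji : j = i.val := by rw [← hvj, h]
      rw [hj₀, if_pos (by omega)]
      omega
    · have hnegval : (-i).val = p - i.val := by rw [ZMod.neg_val, if_neg hi0]
      have hji : j = p - i.val := by rw [← hvj, h, hnegval]
      rw [hj₀, if_neg (by omega)]
      omega
  have h1j₀ : (1 : ℕ) ≠ j₀ := by
    intro h
    have hsq1 : (((1 : ℕ) : ZMod p)) ^ 2 = -1 := by rw [h]; exact hj₀sq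
    rw [Nat.cast_one, one_pow] at hsq1
    have h2 : ((2 : ℕ) : ZMod p) = 0 := by push_cast; linear_combination hsq1
    rw [ZMod.natCast_eq_zero_iff] at h2
    have := Nat.le_of_dvd (by norm_num) h2
    omega
  have hfix : ∀ j ∈ Finset.Icc 1 n, (σ j = j ↔ (j = 1 ∨ j = j₀)) := by
    intro j hj
    have hj0 := hjne j hj
    obtain ⟨hmem, hcast⟩ := hkey j hj
    have hvj := hval_j j hj
    have hb := Finset.mem_Icc.mp hj
    constructor
    · intro hfixj
      rw [hfixj] at hcast
      rcases hcast with h | h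
      · -- j² = 1
        have h2 := mul_inv_cancel₀ hj0
        have hsq1 : ((j : ZMod p)) ^ 2 = 1 := by
          linear_combination (j : ZMod p) * h + h2
        have hf : ((j : ZMod p) - 1) * ((j : ZMod p) + 1) = 0 := by
          linear_combination hsq1
        rcases mul_eq_zero.mp hf with h' | h'
        · left
          have hj1 : (j : ZMod p) = 1 := by linear_combination h'
          rw [← hvj, hj1, ZMod.val_one]
        · exfalso
          have hj1 : (j : ZMod p) = -1 := by linear_combination h'
          have : j = p - 1 := by
            rw [← hvj, hj1, ZMod.neg_val, if_neg (one_ne_zero : (1 : ZMod p) ≠ 0), ZMod.val_one]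
          omega
      · -- j² = -1
        have h2 := mul_inv_cancel₀ hj0
        have hsqm : ((j : ZMod p)) ^ 2 = -1 := by
          linear_combination (j : ZMod p) * h - h2
        exact Or.inr (huniq j hj hsqm)
    · rintro (rfl | rfl)
      · have hone : (((1 : ℕ) : ZMod p))⁻¹ = 1 := by rw [Nat.cast_one, inv_one]
        rw [hσval 1, hone, ZMod.val_one, if_pos (by omega)]
      · have hj₀0 := hjne j₀ hj₀mem
        have hinvj0 : ((j₀ : ZMod p))⁻¹ = -(j₀ : ZMod p) :=
          inv_eq_of_mul_eq_one_right (by linear_combination -hj₀sq)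
        rw [hσval j₀, hinvj0, ZMod.neg_val, if_neg hj₀0, hval_j j₀ hj₀mem,
          if_neg (by omega)]
        omega
  -- assemble the sum
  have hsum := sum_invol (Finset.Icc 1 n) σ g (fun j hj => (hkey j hj).1) hinvol hgs
  have hsumcard := sum_invol (Finset.Icc 1 n) σ (fun _ => (1 : ℤ))
    (fun j hj => (hkey j hj).1) hinvol (fun _ _ => rfl)
  have hfilter : (Finset.Icc 1 n).filter (fun j => σ j = j) = {1, j₀} := by
    apply Finset.ext
    intro j
    simp only [Finset.mem_filter, Finset.mem_insert, Finset.mem_singleton]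
    constructor
    · rintro ⟨hj, hfx⟩
      exact (hfix j hj).mp hfx
    · rintro (rfl | rfl)
      · have h1mem : (1 : ℕ) ∈ Finset.Icc 1 n := by rw [Finset.mem_Icc]; omega
        exact ⟨h1mem, (hfix 1 h1mem).mpr (Or.inl rfl)⟩
      · exact ⟨hj₀mem, (hfix j₀ hj₀mem).mpr (Or.inr rfl)⟩
  rw [hfilter, Finset.sum_pair h1j₀] at hsum hsumcard
  have hg1 : g 1 = legendreSym p 2 := by
    show legendreSym p (1 + ((1 : ℕ) : ℤ) ^ 2) * legendreSym p ((1 : ℕ) : ℤ) = legendreSym p 2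
    norm_num
  have hgj₀ : g j₀ = 0 := by
    have hz : legendreSym p (1 + (j₀ : ℤ) ^ 2) = 0 := by
      rw [legendreSym.eq_zero_iff]
      push_cast
      linear_combination hj₀sq
    show legendreSym p (1 + (j₀ : ℤ) ^ 2) * legendreSym p (j₀ : ℤ) = 0
    rw [hz, zero_mul]
  have hcardIcc : ∑ _j ∈ Finset.Icc 1 n, (1 : ℤ) = (n : ℤ) := by
    rw [Finset.sum_const, nsmul_eq_mul, mul_one, Nat.card_Icc]
    push_cast
    omega
  rw [hcardIcc] at hsumcard
  have hsl : ∑ _j ∈ (Finset.Icc 1 n).filter (fun j => j < σ j), (1 : ℤ)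
      = (((Finset.Icc 1 n).filter (fun j => j < σ j)).card : ℤ) := by
    rw [Finset.sum_const, nsmul_eq_mul, mul_one]
  rw [hsl] at hsumcard
  have hpm : ∀ j ∈ (Finset.Icc 1 n).filter (fun j => j < σ j), g j = 1 ∨ g j = -1 := by
    intro j hj'
    obtain ⟨hj, hlt⟩ := Finset.mem_filter.mp hj'
    have hjj₀ : j ≠ j₀ := by
      intro h
      have := (hfix j hj).mpr (Or.inr h)
      omega
    have hb := Finset.mem_Icc.mp hj
    have hl1 : legendreSym p (j : ℤ) = 1 ∨ legendreSym p (j : ℤ) = -1 := by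
      apply legendreSym.eq_one_or_neg_one
      have := hjne j hj
      push_cast
      exact this
    have hl2 : legendreSym p (1 + (j : ℤ) ^ 2) = 1 ∨
        legendreSym p (1 + (j : ℤ) ^ 2) = -1 := by
      apply legendreSym.eq_one_or_neg_one
      intro h0
      apply hjj₀
      apply huniq j hj
      push_cast at h0
      linear_combination h0
    show legendreSym p (1 + (j : ℤ) ^ 2) * legendreSym p (j : ℤ) = 1 ∨
      legendreSym p (1 + (j : ℤ) ^ 2) * legendreSym p (j : ℤ) = -1
    rcases hl1 with h1 | h1 <;> rcases hl2 with h2 | h2 <;> rw [h1, h2] <;> norm_num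
  obtain ⟨k, hk⟩ := sum_pm ((Finset.Icc 1 n).filter (fun j => j < σ j)) g hpm
  have hp8 : p % 8 = 1 ∨ p % 8 = 5 := by omega
  have he := legendreSym.at_two (p := p) (by omega : p ≠ 2)
  rw [ZMod.χ₈_nat_eq_if_mod_eight] at he
  rw [hg1, hgj₀] at hsum
  show (∑ j ∈ Finset.Icc 1 n, g j) % 4 = 3
  rcases hp8 with h8 | h8
  · rw [if_neg (by omega), if_pos (Or.inl h8)] at he
    rw [he] at hsum
    omega
  · rw [if_neg (by omega), if_neg (by omega)] at he
    rw [he] at hsum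
    omega

lemma lem_unique (P A C T U : ℤ) (hP : Prime P) (hodd : P % 2 = 1)
    (h1 : P = A ^ 2 + C ^ 2) (h2 : P = T ^ 2 + U ^ 2)
    (hA : A % 2 = 1) (hT : T % 2 = 1) : A ^ 2 = T ^ 2 := by
  have hP0 : P ≠ 0 := hP.ne_zero
  have hPpos : 0 < P := by
    rcases lt_trichotomy P 0 with h | h | h
    · nlinarith [sq_nonneg A, sq_nonneg C]
    · exact absurd h hP0
    · exact h
  obtain ⟨x, hx⟩ : ∃ x, A = 2 * x + 1 := ⟨A / 2, by omega⟩
  obtain ⟨y, hy⟩ : ∃ y, T = 2 * y + 1 := ⟨T / 2, by omega⟩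
  have hnotsum : A ^ 2 + T ^ 2 ≠ P := by
    intro h
    have h' : P = 2 * (2 * (x ^ 2 + x + y ^ 2 + y) + 1) := by rw [← h, hx, hy]; ring
    omega
  have key : P ∣ (A * U - C * T) * (A * U + C * T) :=
    ⟨A ^ 2 + U ^ 2 - P, by linear_combination (T ^ 2) * h1 + (P - A ^ 2) * h2⟩
  have main : ∀ s : ℤ, s ^ 2 = 1 → P ∣ (A * U - s * (C * T)) → A ^ 2 = T ^ 2 := by
    intro s hs hdvd
    obtain ⟨k, hk⟩ := hdvd
    have hid : (A * T + s * (C * U)) ^ 2 + (A * U - s * (C * T)) ^ 2 = P ^ 2 := by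
      linear_combination (-(T ^ 2) - U ^ 2) * h1 + (-P) * h2 + (C ^ 2 * (T ^ 2 + U ^ 2)) * hs
    have hsq : (A * T + s * (C * U)) ^ 2 = P ^ 2 * (1 - k ^ 2) := by
      linear_combination hid + (-(A * U - s * (C * T)) - P * k) * hk
    have hk2 : k ^ 2 ≤ 1 := by nlinarith [sq_nonneg (A * T + s * (C * U)), sq_nonneg P, mul_pos hPpos hPpos]
    obtain ⟨hk3, hk4⟩ : -1 ≤ k ∧ k ≤ 1 := abs_le.mp (by nlinarith [abs_nonneg k, sq_abs k])
    interval_cases k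
    · -- k = -1
      exfalso
      have hz : A * T + s * (C * U) = 0 := by
        have : (A * T + s * (C * U)) ^ 2 = 0 := by rw [hsq]; ring
        exact pow_eq_zero_iff (n := 2) (by norm_num) |>.mp this
      have hPP : P * (A ^ 2 + T ^ 2) = P * P := by
        linear_combination (A * T - s * (C * U)) * hz + (C ^ 2 * U ^ 2) * hs - (U ^ 2) * h1 +
          (A ^ 2 - P) * h2
      exact hnotsum (mul_left_cancel₀ hP0 hPP)
    · -- k = 0
      have hk0 : A * U - s * (C * T) = 0 := by rw [hk]; ring
      have hPP : P * A ^ 2 = P * T ^ 2 := by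
        linear_combination (A ^ 2) * h2 - (T ^ 2) * h1 + (A * U + s * (C * T)) * hk0 +
          (C ^ 2 * T ^ 2) * hs
      exact mul_left_cancel₀ hP0 hPP
    · -- k = 1
      exfalso
      have hz : A * T + s * (C * U) = 0 := by
        have : (A * T + s * (C * U)) ^ 2 = 0 := by rw [hsq]; ring
        exact pow_eq_zero_iff (n := 2) (by norm_num) |>.mp this
      have hPP : P * (A ^ 2 + T ^ 2) = P * P := by
        linear_combination (A * T - s * (C * U)) * hz + (C ^ 2 * U ^ 2) * hs - (U ^ 2) * h1 +
          (A ^ 2 - P) * h2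
      exact hnotsum (mul_left_cancel₀ hP0 hPP)
  rcases hP.2.2 _ _ key with h | h
  · exact main 1 (by norm_num) (by rw [one_mul]; exact h)
  · refine main (-1) (by norm_num) ?_
    have he : A * U - (-1) * (C * T) = A * U + C * T := by ring
    rw [he]; exact h

end Stmt5Aux

theorem stmt5 (p : ℕ) [Fact p.Prime] (a b : ℤ) (hp : (p : ℤ) = a ^ 2 + 4 * b ^ 2)
    (ha : a % 4 = 1) :
    ∑ j ∈ Finset.Icc 1 ((p - 1) / 2),
        legendreSym p (1 + (j : ℤ) ^ 2) * legendreSym p (j : ℤ) = -a := by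
  have hp4 : p % 4 = 1 := by
    obtain ⟨k, hk⟩ : ∃ k, a = 4 * k + 1 := ⟨a / 4, by omega⟩
    have h : (p : ℤ) = 4 * (4 * k ^ 2 + 2 * k + b ^ 2) + 1 := by rw [hp, hk]; ring
    have h2 : ((p : ℤ)) % 4 = 1 := by omega
    omega
  have h5 := Stmt5Aux.hp5 p hp4
  obtain ⟨r, hr⟩ := quadraticChar_exists_neg_one (Stmt5Aux.hchar p hp4)
  set T := ∑ j ∈ Finset.Icc 1 ((p - 1) / 2),
      legendreSym p (1 + (j : ℤ) ^ 2) * legendreSym p (j : ℤ) with hT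
  have hfold := Stmt5Aux.lem_fold p hp4
  rw [← hT] at hfold
  have hmod := Stmt5Aux.lem_mod4 p hp4
  rw [← hT] at hmod
  have h4p := Stmt5Aux.lem_4p p hp4 hr
  obtain ⟨U, hU⟩ := Stmt5Aux.lem_even p hp4 hr
  have hTU : (p : ℤ) = T ^ 2 + U ^ 2 := by
    rw [hfold, hU] at h4p
    nlinarith [h4p]
  have hTodd : T % 2 = 1 := by omega
  have haodd : a % 2 = 1 := by omega
  have hPodd : (p : ℤ) % 2 = 1 := by omega
  have hprime : Prime (p : ℤ) := Int.prime_iff_natAbs_prime.mpr (by simpa using (Fact.out : p.Prime))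
  have hsq := Stmt5Aux.lem_unique (p : ℤ) a (2 * b) T U hprime hPodd
    (by rw [hp]; ring) hTU haodd hTodd
  have hfac : (a - T) * (a + T) = 0 := by linear_combination hsq
  rcases mul_eq_zero.mp hfac with h | h
  · exfalso
    omega
  · omega
end

section
/- Let p ≡ 1 (mod 4) be a prime, n = (p-1)/2, χ_p a generator of the character group modulo p, and λ_k = Σ_{j=1}^{n} ((1+j^2)/p) χ_p^k(j^2) for 1 ≤ k ≤ n. Then the determinant S(1,p) = det[((i^2+j^2)/p)]_{1≤i,j≤n} equals ∏_{k=1}^{n} λ_k. -/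
open Finset

namespace Stmt7Aux

/-- The square of `j+1` in `ZMod p`, for `j : Fin ((p-1)/2)`. -/
def sq (p : ℕ) (j : Fin ((p - 1) / 2)) : ZMod p := ((((j : ℕ) + 1 : ℕ) : ZMod p)) ^ 2

variable {p : ℕ} [Fact p.Prime]

private lemma two_n (hp4 : p % 4 = 1) : 2 * ((p - 1) / 2) = p - 1 := by
  have := (Fact.out : p.Prime).two_le; omega

private lemma hp5 (hp4 : p % 4 = 1) : 5 ≤ p := by
  have h2 := (Fact.out : p.Prime).two_le
  have h3 : p ≠ 3 := by rintro rfl; omega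
  have h4 : p ≠ 2 := by rintro rfl; omega
  rcases Nat.lt_or_ge p 5 with h | h
  · interval_cases p <;> omega
  · exact h

private lemma cast_ne_zero (hp4 : p % 4 = 1) {j : ℕ} (h1 : 1 ≤ j) (h2 : j ≤ (p - 1) / 2) :
    ((j : ZMod p)) ≠ 0 := by
  have hp := (Fact.out : p.Prime).two_le
  have h2n := two_n hp4
  intro h
  rw [ZMod.natCast_eq_zero_iff] at h
  have := Nat.le_of_dvd (by omega) h
  omega

private lemma sq_ne_zero (hp4 : p % 4 = 1) (j : Fin ((p - 1) / 2)) :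
    ((((j : ℕ) + 1 : ℕ) : ZMod p)) ≠ 0 :=
  cast_ne_zero hp4 (by omega) (by have := j.2; omega)

private lemma sq_isUnit (hp4 : p % 4 = 1) (j : Fin ((p - 1) / 2)) : IsUnit (sq p j) :=
  isUnit_iff_ne_zero.mpr (pow_ne_zero _ (sq_ne_zero hp4 j))

/-- Halving lemma: a sum over units of `F(x²)` is twice the sum over `j = 1, …, (p-1)/2`
of `F(j²)`. -/
private lemma halving (hp4 : p % 4 = 1) (F : ZMod p → ℂ) :
    ∑ x : (ZMod p)ˣ, F ((x : ZMod p) ^ 2)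
      = 2 * ∑ j : Fin ((p - 1) / 2), F (sq p j) := by
  have hp := (Fact.out : p.Prime).two_le
  have h2n : 2 * ((p - 1) / 2) = p - 1 := two_n hp4
  set n := (p - 1) / 2 with hn
  have hu : ∀ j : Fin n, (((j : ℕ) + 1 : ℕ) : ZMod p) ≠ 0 := sq_ne_zero hp4
  let u : Fin n → (ZMod p)ˣ := fun j => Units.mk0 _ (hu j)
  let e : Fin n ⊕ Fin n → (ZMod p)ˣ := Sum.elim u (fun j => -u j)
  have hval : ∀ j : Fin n, (u j : ZMod p) = (((j : ℕ) + 1 : ℕ) : ZMod p) := fun j => rfl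
  have hcast : ∀ c d : Fin n, ((((c : ℕ) + 1 : ℕ)) : ZMod p) = (((d : ℕ) + 1 : ℕ) : ZMod p) → c = d := by
    intro c d hcd
    have hc := c.2; have hd := d.2
    have := congrArg ZMod.val hcd
    rw [ZMod.val_cast_of_lt (by omega), ZMod.val_cast_of_lt (by omega)] at this
    exact Fin.ext (by omega)
  have hneg : ∀ c d : Fin n, ((((c : ℕ) + 1 : ℕ)) : ZMod p) = -((((d : ℕ) + 1 : ℕ)) : ZMod p) → False := by
    intro c d hcd
    have hc := c.2; have hd := d.2
    have hz : ((((c : ℕ) + 1) + ((d : ℕ) + 1) : ℕ) : ZMod p) = 0 := by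
      push_cast
      push_cast at hcd
      rw [hcd]; ring
    rw [ZMod.natCast_eq_zero_iff] at hz
    have := Nat.le_of_dvd (by omega) hz
    omega
  have hinj : Function.Injective e := by
    rintro (a | a) (b | b) hab <;> simp only [e, Sum.elim_inl, Sum.elim_inr] at hab
    · exact congrArg Sum.inl (hcast a b (by rw [← hval a, ← hval b, hab]))
    · exact absurd (by rw [← hval a, hab, Units.val_neg, hval b]) (fun h => hneg a b h)
    · exact absurd (by rw [← hval b, ← hab, Units.val_neg, hval a]) (fun h => hneg b a h)
    · have : u a = u b := neg_injective hab
      exact congrArg Sum.inr (hcast a b (by rw [← hval a, ← hval b, this]))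
  have hcardeq : Fintype.card (Fin n ⊕ Fin n) = Fintype.card (ZMod p)ˣ := by
    rw [Fintype.card_sum, Fintype.card_fin, ZMod.card_units]
    omega
  have hbij : Function.Bijective e :=
    (Fintype.bijective_iff_injective_and_card e).mpr ⟨hinj, hcardeq⟩
  have hsum := Fintype.sum_bijective e hbij
      (fun s => F (((e s : (ZMod p)ˣ) : ZMod p) ^ 2)) (fun x => F ((x : ZMod p) ^ 2))
      (fun s => rfl)
  rw [← hsum, Fintype.sum_sum_type]
  have h1 : ∀ j : Fin n, F (((e (Sum.inl j) : (ZMod p)ˣ) : ZMod p) ^ 2) = F (sq p j) := by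
    intro j; rfl
  have h2 : ∀ j : Fin n, F (((e (Sum.inr j) : (ZMod p)ˣ) : ZMod p) ^ 2) = F (sq p j) := by
    intro j
    have : ((e (Sum.inr j) : (ZMod p)ˣ) : ZMod p) ^ 2 = sq p j := by
      show ((-u j : (ZMod p)ˣ) : ZMod p) ^ 2 = sq p j
      rw [Units.val_neg, neg_sq]
      rfl
    rw [this]
  rw [Finset.sum_congr rfl (fun j _ => h1 j), Finset.sum_congr rfl (fun j _ => h2 j)]
  ring

/-- Orthogonality: sum over units of a nontrivial character is zero. -/
private lemma sum_units_char (χ : MulChar (ZMod p) ℂ) (hχ : χ ≠ 1) :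
    ∑ x : (ZMod p)ˣ, χ (x : ZMod p) = 0 := by
  classical
  have h0 := MulChar.sum_eq_zero_of_ne_one hχ
  have himg : (Finset.univ.image (fun x : (ZMod p)ˣ => (x : ZMod p))) = Finset.univ.erase 0 := by
    ext a
    simp only [Finset.mem_image, Finset.mem_univ, true_and, Finset.mem_erase, and_true]
    constructor
    · rintro ⟨x, rfl⟩; exact x.ne_zero
    · intro ha; exact ⟨Units.mk0 a ha, rfl⟩
  rw [← Finset.sum_image (fun (a : (ZMod p)ˣ) (_ : a ∈ Finset.univ) b (_ : b ∈ Finset.univ)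
      (h : (a : ZMod p) = b) => Units.ext h), himg]
  rw [← Finset.add_sum_erase _ _ (Finset.mem_univ (0 : ZMod p))] at h0
  rw [MulChar.map_zero, zero_add] at h0
  exact h0

/-- For `ψ` with `ψ² ≠ 1`, the sum of `ψ` over the squares `1², …, n²` is zero. -/
private lemma sum_sq_char_eq_zero (hp4 : p % 4 = 1) (ψ : MulChar (ZMod p) ℂ)
    (hψ : ψ ^ 2 ≠ 1) :
    ∑ j : Fin ((p - 1) / 2), ψ (sq p j) = 0 := by
  have h := halving hp4 (fun t => ψ t)
  have h2 : ∑ x : (ZMod p)ˣ, ψ ((x : ZMod p) ^ 2)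
      = ∑ x : (ZMod p)ˣ, (ψ ^ 2) ((x : ZMod p)) := by
    refine Finset.sum_congr rfl fun x _ => ?_
    rw [map_pow, MulChar.pow_apply' ψ two_ne_zero]
  rw [h2, sum_units_char _ hψ] at h
  have := h.symm
  rcases mul_eq_zero.mp this with h' | h'
  · exact absurd h' two_ne_zero
  · exact h'

/-- The sum of the trivial character over the squares is `n`. -/
private lemma sum_sq_one (hp4 : p % 4 = 1) :
    ∑ j : Fin ((p - 1) / 2), (1 : MulChar (ZMod p) ℂ) (sq p j) = ((p - 1) / 2 : ℕ) := by
  rw [Finset.sum_congr rfl fun j _ => MulChar.one_apply (sq_isUnit hp4 j)]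
  simp

private lemma orderOf_chi (χp : MulChar (ZMod p) ℂ)
    (hgen : ∀ χ : MulChar (ZMod p) ℂ, ∃ m : ℕ, χ = χp ^ m) : orderOf χp = p - 1 := by
  classical
  have hcard : Fintype.card (ZMod p)ˣ = p - 1 := ZMod.card_units p
  have h0 : (Fintype.card (ZMod p)ˣ : ℕ) ≠ 0 := by
    rw [hcard]; have := (Fact.out : p.Prime).two_le; omega
  obtain ⟨ψ, hψ⟩ := MulChar.exists_mulChar_orderOf_eq_card_units (ZMod p)
      (Complex.isPrimitiveRoot_exp _ h0)
  obtain ⟨m, hm⟩ := hgen ψ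
  have h1 : orderOf χp ∣ p - 1 := by
    rw [← hcard]; exact orderOf_dvd_of_pow_eq_one χp.pow_card_eq_one
  have h2 : p - 1 ∣ orderOf χp := by
    rw [← hcard, ← hψ, hm]; exact orderOf_pow_dvd m
  exact Nat.dvd_antisymm h1 h2

private lemma chi_pow_ne (hp4 : p % 4 = 1) (χp : MulChar (ZMod p) ℂ)
    (hgen : ∀ χ : MulChar (ZMod p) ℂ, ∃ m : ℕ, χ = χp ^ m) {a b : ℕ}
    (ha1 : 1 ≤ a) (ha2 : a ≤ (p - 1) / 2) (hb1 : 1 ≤ b) (hb2 : b ≤ (p - 1) / 2)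
    (hab : a ≠ b) : χp ^ (2 * a) ≠ χp ^ (2 * b) := by
  have hord := orderOf_chi χp hgen
  have h2n := two_n hp4
  have hp := (Fact.out : p.Prime).two_le
  have key : ∀ c d : ℕ, c < d → 1 ≤ c → d ≤ (p - 1) / 2 → χp ^ (2 * c) = χp ^ (2 * d) → False := by
    intro c d hcd hc1 hd2 h
    have hx : χp ^ (2 * c) * χp ^ (2 * d - 2 * c) = χp ^ (2 * c) * 1 := by
      rw [mul_one, ← pow_add, h]
      congr 1
      omega
    have h1 : χp ^ (2 * d - 2 * c) = 1 := mul_left_cancel hx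
    have := Nat.le_of_dvd (by omega) (hord ▸ orderOf_dvd_of_pow_eq_one h1)
    omega
  rcases Nat.lt_or_ge a b with h | h
  · exact fun hc => key a b h ha1 hb2 hc
  · have h' : b < a := by omega
    exact fun hc => key b a h' hb1 ha2 hc.symm

end Stmt7Aux

theorem stmt7 (p : ℕ) [Fact p.Prime] (hp4 : p % 4 = 1)
    (χp : MulChar (ZMod p) ℂ)
    (hgen : ∀ χ : MulChar (ZMod p) ℂ, ∃ m : ℕ, χ = χp ^ m) :
    (Matrix.of fun i j : Fin ((p - 1) / 2) =>
        ((legendreSym p (((i : ℤ) + 1) ^ 2 + ((j : ℤ) + 1) ^ 2) : ℤ) : ℂ)).det =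
    ∏ k ∈ Finset.Icc 1 ((p - 1) / 2),
      ∑ j ∈ Finset.Icc 1 ((p - 1) / 2),
        ((legendreSym p (1 + (j : ℤ) ^ 2) : ℤ) : ℂ) *
          (χp ^ k) (((j : ℕ) : ZMod p) ^ 2) := by
  classical
  have hp := (Fact.out : p.Prime).two_le
  have hp5 : 5 ≤ p := Stmt7Aux.hp5 hp4
  have h2n : 2 * ((p - 1) / 2) = p - 1 := Stmt7Aux.two_n hp4
  -- abbreviations
  let Lq : MulChar (ZMod p) ℂ := (quadraticChar (ZMod p)).ringHomComp (Int.castRingHom ℂ)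
  let χ : Fin ((p - 1) / 2) → MulChar (ZMod p) ℂ := fun k => χp ^ ((k : ℕ) + 1)
  let lam : Fin ((p - 1) / 2) → ℂ := fun k =>
    ∑ j : Fin ((p - 1) / 2), Lq (1 + Stmt7Aux.sq p j) * χ k (Stmt7Aux.sq p j)
  let M : Matrix (Fin ((p - 1) / 2)) (Fin ((p - 1) / 2)) ℂ :=
    Matrix.of fun i j => Lq (Stmt7Aux.sq p i + Stmt7Aux.sq p j)
  let V : Matrix (Fin ((p - 1) / 2)) (Fin ((p - 1) / 2)) ℂ :=
    Matrix.of fun i k => χ k (Stmt7Aux.sq p i)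
  let W : Matrix (Fin ((p - 1) / 2)) (Fin ((p - 1) / 2)) ℂ :=
    Matrix.of fun k j => (χ k)⁻¹ (Stmt7Aux.sq p j)
  have hLq : ∀ a : ZMod p, Lq a = ((quadraticChar (ZMod p) a : ℤ) : ℂ) := fun a => rfl
  have hsne := Stmt7Aux.sq_ne_zero hp4
  have hsne0 : ∀ j : Fin ((p - 1) / 2), Stmt7Aux.sq p j ≠ 0 :=
    fun j => pow_ne_zero _ (hsne j)
  -- Step 0 : the matrix in the statement is M
  have hM0 : (Matrix.of fun i j : Fin ((p - 1) / 2) =>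
      ((legendreSym p (((i : ℤ) + 1) ^ 2 + ((j : ℤ) + 1) ^ 2) : ℤ) : ℂ)) = M := by
    ext i j
    simp only [Matrix.of_apply, M, legendreSym]
    rw [hLq]
    congr 2
    rw [Stmt7Aux.sq, Stmt7Aux.sq]
    push_cast
    ring
  -- halving, specialized
  have hhalf : ∀ F : ZMod p → ℂ, ∑ x : (ZMod p)ˣ, F ((x : ZMod p) ^ 2)
      = 2 * ∑ j : Fin ((p - 1) / 2), F (Stmt7Aux.sq p j) := Stmt7Aux.halving hp4
  -- Step A : M * V = V * diagonal lam
  have hMV : M * V = V * Matrix.diagonal lam := by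
    ext i k
    rw [Matrix.mul_apply, Matrix.mul_diagonal]
    have hsi : Stmt7Aux.sq p i ≠ 0 := hsne0 i
    have hkey : (2 : ℂ) * (∑ j, M i j * V j k) = (2 : ℂ) * (V i k * lam k) := by
      have e1 : ∀ j, M i j * V j k
          = (fun t => Lq (1 + (Stmt7Aux.sq p i)⁻¹ * t) * χ k t) (Stmt7Aux.sq p j) := by
        intro j
        simp only [M, V, Matrix.of_apply]
        have hsplit : Stmt7Aux.sq p i + Stmt7Aux.sq p j
            = Stmt7Aux.sq p i * (1 + (Stmt7Aux.sq p i)⁻¹ * Stmt7Aux.sq p j) := by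
          field_simp
        rw [hsplit, map_mul]
        have hone : Lq (Stmt7Aux.sq p i) = 1 := by
          rw [hLq, Stmt7Aux.sq, quadraticChar_sq_one' (hsne i)]
          norm_num
        rw [hone, one_mul]
      rw [Finset.sum_congr rfl (fun j _ => e1 j)]
      rw [← hhalf (fun t => Lq (1 + (Stmt7Aux.sq p i)⁻¹ * t) * χ k t)]
      -- substitute x ↦ cᵢ * x in the unit sum
      have hci : (((i : ℕ) + 1 : ℕ) : ZMod p) ≠ 0 := hsne i
      let ci : (ZMod p)ˣ := Units.mk0 _ hci
      have hsub := Equiv.sum_comp (Equiv.mulLeft ci)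
        (fun x : (ZMod p)ˣ =>
          (fun t => Lq (1 + (Stmt7Aux.sq p i)⁻¹ * t) * χ k t) ((x : ZMod p) ^ 2))
      rw [← hsub]
      have e3 : ∀ x : (ZMod p)ˣ,
          (fun t => Lq (1 + (Stmt7Aux.sq p i)⁻¹ * t) * χ k t)
            (((Equiv.mulLeft ci x : (ZMod p)ˣ) : ZMod p) ^ 2)
          = χ k (Stmt7Aux.sq p i) *
            ((fun t => Lq (1 + t) * χ k t) ((x : ZMod p) ^ 2)) := by
        intro x
        have hval : ((Equiv.mulLeft ci x : (ZMod p)ˣ) : ZMod p) ^ 2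
            = Stmt7Aux.sq p i * (x : ZMod p) ^ 2 := by
          show ((ci * x : (ZMod p)ˣ) : ZMod p) ^ 2 = _
          rw [Units.val_mul, mul_pow]
          rfl
        rw [hval]
        beta_reduce
        have hcancel : (Stmt7Aux.sq p i)⁻¹ * (Stmt7Aux.sq p i * (x : ZMod p) ^ 2)
            = (x : ZMod p) ^ 2 := by
          rw [← mul_assoc, inv_mul_cancel₀ hsi, one_mul]
        rw [hcancel, map_mul]
        ring
      rw [Finset.sum_congr rfl (fun x _ => e3 x), ← Finset.mul_sum]
      rw [hhalf (fun t => Lq (1 + t) * χ k t)]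
      simp only [V, Matrix.of_apply, lam]
      ring
    exact mul_left_cancel₀ two_ne_zero hkey
  -- Step B : W * V = n • 1
  have hWV : W * V = (((p - 1) / 2 : ℕ) : ℂ) • (1 : Matrix _ _ ℂ) := by
    ext k k'
    rw [Matrix.mul_apply, Matrix.smul_apply]
    by_cases hkk : k = k'
    · subst hkk
      have hterm : ∀ j, W k j * V j k = (1 : MulChar (ZMod p) ℂ) (Stmt7Aux.sq p j) := by
        intro j
        simp only [W, V, Matrix.of_apply]
        rw [← MulChar.mul_apply, MulChar.inv_mul]
      rw [Finset.sum_congr rfl (fun j _ => hterm j), Stmt7Aux.sum_sq_one hp4,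
        Matrix.one_apply_eq]
      simp
    · have hterm : ∀ j, W k j * V j k' = (χ k' * (χ k)⁻¹) (Stmt7Aux.sq p j) := by
        intro j
        simp only [W, V, Matrix.of_apply]
        rw [MulChar.mul_apply]
        ring
      have hψ2 : (χ k' * (χ k)⁻¹) ^ 2 ≠ 1 := by
        intro h
        have h' : (χ k') ^ 2 = (χ k) ^ 2 := by
          have := h
          rw [mul_pow, inv_pow, mul_inv_eq_one] at this
          exact this
        have h'' : χp ^ (2 * ((k' : ℕ) + 1)) = χp ^ (2 * ((k : ℕ) + 1)) := by
          simpa only [χ, ← pow_mul, mul_comm] using h'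
        have hk2 := k.2; have hk'2 := k'.2
        exact Stmt7Aux.chi_pow_ne hp4 χp hgen (a := (k' : ℕ) + 1) (b := (k : ℕ) + 1)
          (by omega) (by omega) (by omega) (by omega)
          (fun h => hkk (Fin.ext (by omega)).symm) h''
      rw [Finset.sum_congr rfl (fun j _ => hterm j),
        Stmt7Aux.sum_sq_char_eq_zero hp4 _ hψ2, Matrix.one_apply_ne hkk]
      simp
  -- V has nonzero determinant
  have hndvd : (((p - 1) / 2 : ℕ) : ℂ) ≠ 0 := by
    rw [Nat.cast_ne_zero]
    omega
  have hVdet : V.det ≠ 0 := by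
    intro h
    have := congrArg Matrix.det hWV
    rw [Matrix.det_mul, h, mul_zero, Matrix.det_smul, Matrix.det_one, mul_one] at this
    exact pow_ne_zero _ hndvd this.symm
  -- conclude det M = ∏ lam
  have hdet : M.det = ∏ k : Fin ((p - 1) / 2), lam k := by
    have h1 : M.det * V.det = V.det * (Matrix.diagonal lam).det := by
      rw [← Matrix.det_mul, ← Matrix.det_mul, hMV]
    rw [mul_comm] at h1
    have h2 : M.det = (Matrix.diagonal lam).det := mul_left_cancel₀ hVdet h1
    rw [h2, Matrix.det_diagonal]
  rw [hM0, hdet]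
  -- convert the RHS product over `Icc 1 n` to a product over `Fin n`
  have hIcc : Finset.Icc 1 ((p - 1) / 2) = Finset.Ico 1 ((p - 1) / 2 + 1) := by
    rw [Finset.Ico_add_one_right_eq_Icc]
  have hprodIcc : ∀ g : ℕ → ℂ, ∏ k ∈ Finset.Icc 1 ((p - 1) / 2), g k
      = ∏ k : Fin ((p - 1) / 2), g ((k : ℕ) + 1) := by
    intro g
    rw [hIcc, Finset.prod_Ico_eq_prod_range]
    simp only [Nat.add_sub_cancel]
    rw [← Fin.prod_univ_eq_prod_range (fun i => g (1 + i))]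
    exact Finset.prod_congr rfl fun k _ => by rw [add_comm]
  have hsumIcc : ∀ g : ℕ → ℂ, ∑ k ∈ Finset.Icc 1 ((p - 1) / 2), g k
      = ∑ k : Fin ((p - 1) / 2), g ((k : ℕ) + 1) := by
    intro g
    rw [hIcc, Finset.sum_Ico_eq_sum_range]
    simp only [Nat.add_sub_cancel]
    rw [← Fin.sum_univ_eq_sum_range (fun i => g (1 + i))]
    exact Finset.sum_congr rfl fun k _ => by rw [add_comm]
  rw [hprodIcc]
  refine Finset.prod_congr rfl fun k _ => ?_
  rw [hsumIcc]
  refine Finset.sum_congr rfl fun j _ => ?_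
  simp only [lam, χ]
  congr 1
  rw [hLq, legendreSym]
  congr 2
  rw [Stmt7Aux.sq]
  push_cast
  ring
end

section
/- Let p ≡ 1 (mod 4) be a prime, n = (p-1)/2, χ_p a generator of the character group modulo p, and λ_k = Σ_{j=1}^{n} ((1+j^2)/p) χ_p^k(j^2). Then the product ∏_{k=1}^{(p-5)/4} λ_k is a rational integer. -/
open Finset IntermediateField Polynomial



lemma comb (n m : ℕ) (hn : n = 2 * m + 2) (μ : ℕ → ℂ)
    (hper : ∀ k, μ k = μ (k % n))
    (hsym : ∀ k l, 0 < k → 0 < l → (k + l) % n = 0 → μ k = μ l)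
    (t : ℕ) (ht : Nat.Coprime t n) :
    ∏ k ∈ Icc 1 m, μ (t * k) = ∏ k ∈ Icc 1 m, μ k := by
  have hn0 : 0 < n := by omega
  set f : ℕ → ℕ := fun k => min ((t * k) % n) (n - (t * k) % n) with hf
  -- t is odd
  have htodd : t % 2 = 1 := by
    rcases Nat.even_or_odd t with he | ho
    · exfalso
      have h2 : (2 : ℕ) ∣ Nat.gcd t n := Nat.dvd_gcd he.two_dvd ⟨m + 1, by omega⟩
      rw [ht] at h2
      exact absurd (Nat.le_of_dvd one_pos h2) (by omega)
    · exact Nat.odd_iff.mp ho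
  have hv : ∀ k, 1 ≤ k → k ≤ m → 1 ≤ (t * k) % n ∧ (t * k) % n ≤ n - 1 ∧ (t * k) % n ≠ m + 1 := by
    intro k hk1 hkm
    have hlt : (t * k) % n < n := Nat.mod_lt _ hn0
    have h0 : (t * k) % n ≠ 0 := by
      intro h
      have hdvd : n ∣ t * k := Nat.dvd_of_mod_eq_zero h
      have : n ∣ k := (Nat.Coprime.dvd_of_dvd_mul_left (ht.symm) hdvd)
      have := Nat.le_of_dvd (by omega) this
      omega
    have hh : (t * k) % n ≠ m + 1 := by
      intro h
      obtain ⟨u, hu⟩ : ∃ u, t = 2 * u + 1 := ⟨t / 2, by omega⟩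
      have hmod : t * (m + 1) % n = (m + 1) % n := by
        have heq : t * (m + 1) = (m + 1) + u * n := by
          rw [hu, hn]; ring
        rw [heq, Nat.add_mul_mod_self_right]
      have h1 : t * k ≡ t * (m + 1) [MOD n] := by
        show t * k % n = t * (m + 1) % n
        rw [h, hmod, Nat.mod_eq_of_lt (by omega)]
      have h2 : k ≡ m + 1 [MOD n] := Nat.ModEq.cancel_left_of_coprime ht.symm h1
      have : k % n = (m + 1) % n := h2
      rw [Nat.mod_eq_of_lt (by omega), Nat.mod_eq_of_lt (by omega)] at this
      omega
    exact ⟨by omega, by omega, hh⟩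
  have hmaps : ∀ k, 1 ≤ k → k ≤ m → 1 ≤ f k ∧ f k ≤ m := by
    intro k hk1 hkm
    obtain ⟨h1, h2, h3⟩ := hv k hk1 hkm
    simp only [hf]
    omega
  have hμf : ∀ k, 1 ≤ k → k ≤ m → μ (t * k) = μ (f k) := by
    intro k hk1 hkm
    obtain ⟨h1, h2, h3⟩ := hv k hk1 hkm
    rcases min_cases ((t * k) % n) (n - (t * k) % n) with ⟨hmin, _⟩ | ⟨hmin, _⟩
    · rw [hf]; simp only []; rw [hmin]; exact hper _
    · rw [hf]; simp only []; rw [hmin]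
      have := hper (t * k)
      rw [this]
      apply hsym _ _ (by omega) (by omega)
      have : (t * k) % n + (n - (t * k) % n) = n := by omega
      rw [this, Nat.mod_self]
  have hinj : ∀ k, 1 ≤ k → k ≤ m → ∀ k', 1 ≤ k' → k' ≤ m → f k = f k' → k = k' := by
    intro k hk1 hkm k' hk1' hkm' hfe
    obtain ⟨h1, h2, h3⟩ := hv k hk1 hkm
    obtain ⟨h1', h2', h3'⟩ := hv k' hk1' hkm'
    simp only [hf] at hfe
    have hcases : (t * k) % n = (t * k') % n ∨ (t * k) % n + (t * k') % n = n := by omega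
    rcases hcases with hc | hc
    · have h2 : k ≡ k' [MOD n] := Nat.ModEq.cancel_left_of_coprime ht.symm hc
      have : k % n = k' % n := h2
      rw [Nat.mod_eq_of_lt (by omega), Nat.mod_eq_of_lt (by omega)] at this
      omega
    · exfalso
      have : (t * k + t * k') % n = 0 := by
        rw [Nat.add_mod, hc, Nat.mod_self]
      have hdvd : n ∣ t * (k + k') := by
        rw [Nat.mul_add]
        exact Nat.dvd_of_mod_eq_zero this
      have : n ∣ k + k' := Nat.Coprime.dvd_of_dvd_mul_left (ht.symm) hdvd
      have := Nat.le_of_dvd (by omega) this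
      omega
  apply Finset.prod_bij (fun k _ => f k)
  · intro a ha
    rw [Finset.mem_Icc] at ha ⊢
    exact hmaps a ha.1 ha.2
  · intro a ha b hb h
    rw [Finset.mem_Icc] at ha hb
    exact hinj a ha.1 ha.2 b hb.1 hb.2 h
  · intro b hb
    have := Finset.surj_on_of_inj_on_of_card_le (s := Icc 1 m) (t := Icc 1 m)
      (fun k _ => f k)
      (fun a ha => by rw [Finset.mem_Icc] at ha ⊢; exact hmaps a ha.1 ha.2)
      (fun a b ha hb h => by rw [Finset.mem_Icc] at ha hb; exact hinj a ha.1 ha.2 b hb.1 hb.2 h)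
      le_rfl b hb
    obtain ⟨a, ha, hab⟩ := this
    exact ⟨a, ha, hab.symm⟩
  · intro a ha
    rw [Finset.mem_Icc] at ha
    exact hμf a ha.1 ha.2


lemma key (n m : ℕ) (hn : n = 2 * m + 2) {ι : Type} (s : Finset ι) (c : ι → ℤ) (w : ι → ℂ)
    (hw : ∀ j ∈ s, w j ^ n = 1)
    (hsym : ∀ k l : ℕ, 0 < k → 0 < l → (k + l) % n = 0 →
      ∑ j ∈ s, (c j : ℂ) * w j ^ k = ∑ j ∈ s, (c j : ℂ) * w j ^ l) :
    ∃ z : ℤ, ∏ k ∈ Finset.Icc 1 m, ∑ j ∈ s, (c j : ℂ) * w j ^ k = (z : ℂ) := by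
  have hn0 : n ≠ 0 := by omega
  haveI : NeZero n := ⟨hn0⟩
  set μ : ℕ → ℂ := fun k => ∑ j ∈ s, (c j : ℂ) * w j ^ k with hμ
  have hper : ∀ k, μ k = μ (k % n) := by
    intro k
    apply Finset.sum_congr rfl
    intro j hj
    congr 1
    conv_lhs => rw [← Nat.div_add_mod k n]
    rw [pow_add, pow_mul, hw j hj, one_pow, one_mul]
  have hsym' : ∀ k l : ℕ, 0 < k → 0 < l → (k + l) % n = 0 → μ k = μ l := hsym
  -- the primitive root
  set ζ : ℂ := Complex.exp (2 * Real.pi * Complex.I / n) with hζdef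
  have hζ : IsPrimitiveRoot ζ n := Complex.isPrimitiveRoot_exp n hn0
  -- exponents
  have hex : ∀ j ∈ s, ∃ i, ζ ^ i = w j := by
    intro j hj
    obtain ⟨i, _, hi⟩ := hζ.eq_pow_of_pow_eq_one (hw j hj)
    exact ⟨i, hi⟩
  classical
  set e : ι → ℕ := fun j => if h : ∃ i, ζ ^ i = w j then h.choose else 0 with he_def
  have he : ∀ j ∈ s, ζ ^ (e j) = w j := by
    intro j hj
    have h := hex j hj
    simp only [he_def, dif_pos h]
    exact h.choose_spec
  -- the number field
  have hζint : IsIntegral ℚ ζ := by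
    refine ⟨X ^ n - 1, ?_, ?_⟩
    · have := Polynomial.monic_X_pow_sub_C (1 : ℚ) hn0
      simpa using this
    · simp [hζ.pow_eq_one]
  set K : IntermediateField ℚ ℂ := ℚ⟮ζ⟯ with hK
  haveI : FiniteDimensional ℚ K := IntermediateField.adjoin.finiteDimensional hζint
  haveI : NumberField K := ⟨⟩
  have hζK : ζ ∈ K := IntermediateField.mem_adjoin_simple_self ℚ ζ
  set ζ' : K := ⟨ζ, hζK⟩ with hζ'def
  have hζ'coe : (ζ' : ℂ) = ζ := rfl
  have hζ'prim : IsPrimitiveRoot ζ' n := by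
    apply IsPrimitiveRoot.of_map_of_injective (f := K.val)
    · exact hζ
    · exact Subtype.val_injective
  -- the element of K
  set xK : K := ∏ k ∈ Finset.Icc 1 m, ∑ j ∈ s, (c j : K) * ζ' ^ (e j * k) with hxK
  have hxcoe : (xK : ℂ) = ∏ k ∈ Finset.Icc 1 m, μ k := by
    push_cast [hxK]
    apply Finset.prod_congr rfl
    intro k _
    apply Finset.sum_congr rfl
    intro j hj
    congr 1
    rw [pow_mul, he j hj]
  -- all embeddings fix xK
  have hfix : ∀ φ : K →+* ℂ, φ xK = (xK : ℂ) := by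
    intro φ
    have hφn : (φ ζ') ^ n = 1 := by
      rw [← map_pow]
      have : ζ' ^ n = 1 := by
        apply Subtype.val_injective
        push_cast
        exact hζ.pow_eq_one
      rw [this, map_one]
    have hφprim : IsPrimitiveRoot (φ ζ') n :=
      hζ'prim.map_of_injective φ.injective
    obtain ⟨t, htlt, htcop, hφt⟩ := (hζ.isPrimitiveRoot_iff).mp hφprim
    have hφval : φ xK = ∏ k ∈ Finset.Icc 1 m, μ (t * k) := by
      rw [hxK, map_prod]
      apply Finset.prod_congr rfl
      intro k _
      rw [map_sum]
      apply Finset.sum_congr rfl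
      intro j hj
      rw [map_mul, map_pow, map_intCast, ← hφt, ← he j hj]
      congr 1
      rw [← pow_mul, ← pow_mul]
      congr 1
      ring
    rw [hφval, hxcoe]
    exact comb n m hn μ hper hsym' t htcop
  -- rationality
  have hxint : IsIntegral ℚ xK := IsIntegral.of_finite ℚ xK
  have hrange : (Set.range fun φ : K →+* ℂ => φ xK) = {(xK : ℂ)} := by
    ext y
    constructor
    · rintro ⟨φ, rfl⟩
      exact hfix φ
    · rintro rfl
      exact ⟨(algebraMap K ℂ), hfix _⟩
  have hroot : (minpoly ℚ xK).rootSet ℂ = {(xK : ℂ)} := by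
    have h := NumberField.Embeddings.range_eval_eq_rootSet_minpoly K ℂ xK
    rw [hrange] at h
    exact h.symm
  have hsep : (minpoly ℚ xK).Separable := (minpoly.irreducible hxint).separable
  have hsplit : Splits ((minpoly ℚ xK).map (algebraMap ℚ ℂ)) := IsAlgClosed.splits _
  have hcard : (minpoly ℚ xK).natDegree = 1 := by
    have hc1 : Fintype.card ((minpoly ℚ xK).rootSet ℂ) = 1 := by
      rw [Fintype.card_congr (Equiv.setCongr hroot)]
      simp
    exact (Polynomial.card_rootSet_eq_natDegree hsep hsplit).symm.trans hc1
  obtain ⟨q, hq⟩ := (minpoly.natDegree_eq_one_iff).mp hcard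
  -- integrality
  have hwint : ∀ j ∈ s, IsIntegral ℤ (w j) := by
    intro j hj
    refine ⟨X ^ n - 1, ?_, ?_⟩
    · have := Polynomial.monic_X_pow_sub_C (1 : ℤ) hn0
      simpa using this
    · simp [hw j hj]
  have hPint : IsIntegral ℤ ((xK : ℂ)) := by
    rw [hxcoe]
    rw [← mem_integralClosure_iff]
    apply Subalgebra.prod_mem
    intro k _
    apply Subalgebra.sum_mem
    intro j hj
    apply Subalgebra.mul_mem
    · exact Subalgebra.intCast_mem _ _
    · apply Subalgebra.pow_mem
      rw [mem_integralClosure_iff]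
      exact hwint j hj
  have hqP : algebraMap ℚ ℂ q = (xK : ℂ) := by
    rw [← hq]
    rfl
  have hqint : IsIntegral ℤ q := by
    apply IsIntegral.tower_bot (B := ℂ) (algebraMap ℚ ℂ).injective
    rw [hqP]
    exact hPint
  obtain ⟨z, hz⟩ := IsIntegrallyClosed.isIntegral_iff.mp hqint
  refine ⟨z, ?_⟩
  rw [← hxcoe, ← hqP, ← hz]
  simp


noncomputable def Gaux (p : ℕ) [Fact p.Prime] (χp : MulChar (ZMod p) ℂ) (k : ℕ) (x : ZMod p) : ℂ :=
  ((quadraticChar (ZMod p) (1 + x ^ 2) : ℤ) : ℂ) * (χp (x ^ 2)) ^ k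

lemma hsym_app (p : ℕ) [Fact p.Prime] (hp5 : 5 ≤ p) (hodd : p % 2 = 1)
    (χp : MulChar (ZMod p) ℂ)
    (k l : ℕ) (hk : 0 < k) (hl : 0 < l) (hkl : (k + l) % ((p - 1) / 2) = 0) :
    ∑ j ∈ Finset.Icc 1 ((p - 1) / 2), ((legendreSym p (1 + (j : ℤ) ^ 2) : ℤ) : ℂ) *
        (χp (((j : ℕ) : ZMod p) ^ 2)) ^ k =
    ∑ j ∈ Finset.Icc 1 ((p - 1) / 2), ((legendreSym p (1 + (j : ℤ) ^ 2) : ℤ) : ℂ) *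
        (χp (((j : ℕ) : ZMod p) ^ 2)) ^ l := by
  have hp : p.Prime := Fact.out
  set n := (p - 1) / 2 with hn
  have hn2 : 2 * n = p - 1 := by omega
  have hn1 : 1 ≤ n := by omega
  -- roots of unity
  have hroot : ∀ x : ZMod p, x ≠ 0 → χp (x ^ 2) ^ n = 1 := by
    intro x hx
    calc χp (x ^ 2) ^ n = χp ((x ^ 2) ^ n) := (map_pow χp _ n).symm
      _ = χp (x ^ (p - 1)) := by rw [← pow_mul, mul_comm 2 n, mul_comm n 2, hn2]
      _ = χp 1 := by rw [ZMod.pow_card_sub_one_eq_one hx]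
      _ = 1 := map_one χp
  -- G at zero
  have hGzero : ∀ k', 0 < k' → Gaux p χp k' 0 = 0 := by
    intro k' hk'
    have h0 : χp ((0 : ZMod p) ^ 2) = 0 := by
      rw [zero_pow (two_ne_zero)]
      exact χp.map_nonunit (by simp)
    simp only [Gaux, h0, zero_pow hk'.ne', mul_zero]
  -- doubling
  have hdouble : ∀ k', 0 < k' → ∑ x : ZMod p, Gaux p χp k' x
      = 2 * ∑ j ∈ Finset.Icc 1 n, Gaux p χp k' ((j : ℕ) : ZMod p) := by
    intro k' hk'
    have h1 : ∑ x : ZMod p, Gaux p χp k' x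
        = ∑ j ∈ Finset.Icc 0 (p - 1), Gaux p χp k' ((j : ℕ) : ZMod p) := by
      apply Finset.sum_nbij' (i := fun x : ZMod p => x.val) (j := fun j : ℕ => (j : ZMod p))
      · intro a _
        rw [Finset.mem_Icc]
        have := ZMod.val_lt a
        omega
      · intro a _
        exact Finset.mem_univ _
      · intro a _
        exact ZMod.natCast_zmod_val a
      · intro j hj
        rw [Finset.mem_Icc] at hj
        exact ZMod.val_cast_of_lt (by omega)
      · intro a _
        rw [ZMod.natCast_zmod_val]
    have h2 : Finset.Icc 0 (p - 1) = insert 0 (Finset.Icc 1 (p - 1)) := by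
      ext j
      simp only [Finset.mem_Icc, Finset.mem_insert]
      omega
    have hIoc : ∀ x : ℕ, Finset.Icc 1 x = Finset.Ioc 0 x := by
      intro x
      ext j
      simp only [Finset.mem_Icc, Finset.mem_Ioc]
      omega
    have h3 : ∑ j ∈ Finset.Ioc 0 n, Gaux p χp k' ((j : ℕ) : ZMod p)
        + ∑ j ∈ Finset.Ioc n (p - 1), Gaux p χp k' ((j : ℕ) : ZMod p)
        = ∑ j ∈ Finset.Ioc 0 (p - 1), Gaux p χp k' ((j : ℕ) : ZMod p) :=
      Finset.sum_Ioc_consecutive _ (Nat.zero_le n) (by omega)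
    have h4 : ∑ j ∈ Finset.Ioc n (p - 1), Gaux p χp k' ((j : ℕ) : ZMod p)
        = ∑ j ∈ Finset.Ioc 0 n, Gaux p χp k' ((j : ℕ) : ZMod p) := by
      apply Finset.sum_nbij' (i := fun j : ℕ => p - j) (j := fun j : ℕ => p - j)
      · intro a ha
        rw [Finset.mem_Ioc] at ha ⊢
        omega
      · intro a ha
        rw [Finset.mem_Ioc] at ha ⊢
        omega
      · intro a ha
        rw [Finset.mem_Ioc] at ha
        omega
      · intro a ha
        rw [Finset.mem_Ioc] at ha
        omega
      · intro a ha
        rw [Finset.mem_Ioc] at ha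
        have hcast : ((p - a : ℕ) : ZMod p) = -((a : ℕ) : ZMod p) := by
          have hle : a ≤ p := by omega
          rw [Nat.cast_sub hle, ZMod.natCast_self, zero_sub]
        rw [hcast]
        simp [Gaux, neg_sq]
    calc ∑ x : ZMod p, Gaux p χp k' x
        = ∑ j ∈ Finset.Icc 0 (p - 1), Gaux p χp k' ((j : ℕ) : ZMod p) := h1
      _ = Gaux p χp k' ((0 : ℕ) : ZMod p)
          + ∑ j ∈ Finset.Icc 1 (p - 1), Gaux p χp k' ((j : ℕ) : ZMod p) := by
          rw [h2, Finset.sum_insert (by simp)]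
      _ = ∑ j ∈ Finset.Ioc 0 (p - 1), Gaux p χp k' ((j : ℕ) : ZMod p) := by
          rw [Nat.cast_zero, hGzero k' hk', zero_add, hIoc]
      _ = ∑ j ∈ Finset.Ioc 0 n, Gaux p χp k' ((j : ℕ) : ZMod p)
          + ∑ j ∈ Finset.Ioc n (p - 1), Gaux p χp k' ((j : ℕ) : ZMod p) := h3.symm
      _ = 2 * ∑ j ∈ Finset.Icc 1 n, Gaux p χp k' ((j : ℕ) : ZMod p) := by
          rw [h4, hIoc]
          ring
  -- pointwise inversion identity
  have hpt : ∀ x : ZMod p, Gaux p χp k x⁻¹ = Gaux p χp l x := by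
    intro x
    by_cases hx : x = 0
    · rw [hx, inv_zero, hGzero k hk, hGzero l hl]
    · have hquad : (quadraticChar (ZMod p) (1 + x⁻¹ ^ 2) : ℤ)
          = quadraticChar (ZMod p) (1 + x ^ 2) := by
        have harg : 1 + x⁻¹ ^ 2 = x⁻¹ ^ 2 * (1 + x ^ 2) := by
          field_simp
          ring
        rw [harg, map_mul, quadraticChar_sq_one' (inv_ne_zero hx), one_mul]
      have hmul : χp (x ^ 2) * χp (x⁻¹ ^ 2) = 1 := by
        rw [← map_mul]
        have : x ^ 2 * x⁻¹ ^ 2 = 1 := by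
          field_simp
        rw [this, map_one]
      have h6 : χp (x ^ 2) ^ k * χp (x⁻¹ ^ 2) ^ k = 1 := by
        rw [← mul_pow, hmul, one_pow]
      have h7 : χp (x ^ 2) ^ k * χp (x ^ 2) ^ l = 1 := by
        obtain ⟨d, hd⟩ : n ∣ (k + l) := Nat.dvd_of_mod_eq_zero hkl
        rw [← pow_add, hd, pow_mul, hroot x hx, one_pow]
      have hχ : χp (x⁻¹ ^ 2) ^ k = χp (x ^ 2) ^ l := by
        rw [← inv_eq_of_mul_eq_one_right h6, ← inv_eq_of_mul_eq_one_right h7]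
      simp only [Gaux]
      rw [hquad, hχ]
  have hinv : ∑ x : ZMod p, Gaux p χp l x = ∑ x : ZMod p, Gaux p χp k x := by
    apply Fintype.sum_bijective (fun x : ZMod p => x⁻¹) inv_involutive.bijective
    intro x
    exact (hpt x).symm
  -- rewrite statement sums in terms of Gaux
  have hsum_eq : ∀ k' : ℕ, ∑ j ∈ Finset.Icc 1 n, ((legendreSym p (1 + (j : ℤ) ^ 2) : ℤ) : ℂ) *
      (χp (((j : ℕ) : ZMod p) ^ 2)) ^ k' = ∑ j ∈ Finset.Icc 1 n, Gaux p χp k' ((j : ℕ) : ZMod p) := by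
    intro k'
    apply Finset.sum_congr rfl
    intro j _
    have hcast : ((1 + (j : ℤ) ^ 2 : ℤ) : ZMod p) = 1 + ((j : ℕ) : ZMod p) ^ 2 := by
      push_cast
      ring
    simp only [Gaux, legendreSym, hcast]
  rw [hsum_eq k, hsum_eq l]
  have h2k := hdouble k hk
  have h2l := hdouble l hl
  apply mul_left_cancel₀ (two_ne_zero (α := ℂ))
  rw [← h2k, ← h2l]
  exact hinv.symm

theorem stmt8 (p : ℕ) [Fact p.Prime] (hp4 : p % 4 = 1) (hp5 : 5 ≤ p)
    (χp : MulChar (ZMod p) ℂ)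
    (hgen : ∀ χ : MulChar (ZMod p) ℂ, ∃ m : ℕ, χ = χp ^ m) :
    ∃ z : ℤ,
      ∏ k ∈ Finset.Icc 1 ((p - 5) / 4),
        ∑ j ∈ Finset.Icc 1 ((p - 1) / 2),
          ((legendreSym p (1 + (j : ℤ) ^ 2) : ℤ) : ℂ) *
            (χp ^ k) (((j : ℕ) : ZMod p) ^ 2) = (z : ℂ) := by
  have hp : p.Prime := Fact.out
  have hodd : p % 2 = 1 := by omega
  have hn : (p - 1) / 2 = 2 * ((p - 5) / 4) + 2 := by omega
  have hw : ∀ j ∈ Finset.Icc 1 ((p - 1) / 2),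
      χp (((j : ℕ) : ZMod p) ^ 2) ^ ((p - 1) / 2) = 1 := by
    intro j hj
    rw [Finset.mem_Icc] at hj
    have hj0 : ((j : ℕ) : ZMod p) ≠ 0 := by
      rw [Ne, ZMod.natCast_eq_zero_iff]
      intro hdvd
      have := Nat.le_of_dvd (by omega) hdvd
      omega
    have hn2 : 2 * ((p - 1) / 2) = p - 1 := by omega
    calc χp (((j : ℕ) : ZMod p) ^ 2) ^ ((p - 1) / 2)
        = χp ((((j : ℕ) : ZMod p) ^ 2) ^ ((p - 1) / 2)) := (map_pow χp _ _).symm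
      _ = χp (((j : ℕ) : ZMod p) ^ (p - 1)) := by
          rw [← pow_mul, mul_comm 2 ((p - 1) / 2), mul_comm ((p - 1) / 2) 2, hn2]
      _ = χp 1 := by rw [ZMod.pow_card_sub_one_eq_one hj0]
      _ = 1 := map_one χp
  obtain ⟨z, hz⟩ := key ((p - 1) / 2) ((p - 5) / 4) hn (Finset.Icc 1 ((p - 1) / 2))
    (fun j => legendreSym p (1 + (j : ℤ) ^ 2))
    (fun j => χp (((j : ℕ) : ZMod p) ^ 2)) hw
    (fun k l hk hl hkl => hsym_app p hp5 hodd χp k l hk hl hkl)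
  refine ⟨z, ?_⟩
  rw [← hz]
  apply Finset.prod_congr rfl
  intro k hk
  rw [Finset.mem_Icc] at hk
  apply Finset.sum_congr rfl
  intro j _
  rw [MulChar.pow_apply' χp (by omega : k ≠ 0)]
end

section
/- Let p be an odd prime, n = (p-1)/2, and d an integer with (d/p) = -1. Then S(d,p) = det[((i^2 + d·j^2)/p)]_{1≤i,j≤n} = 0. -/
open Finset

private lemma sum_erase_one (p : ℕ) [Fact p.Prime] (hp2 : p ≠ 2) :
    ∑ u ∈ (univ : Finset (ZMod p)).erase 1, quadraticChar (ZMod p) u = -1 := by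
  have hchar : ringChar (ZMod p) ≠ 2 := by
    rw [ZMod.ringChar_zmod_n]; exact hp2
  have h0 := quadraticChar_sum_zero (F := ZMod p) hchar
  have h := Finset.add_sum_erase univ (quadraticChar (ZMod p)) (mem_univ (1 : ZMod p))
  rw [h0] at h
  have h1 : quadraticChar (ZMod p) 1 = 1 := map_one _
  linarith [h, h1.symm ▸ h]

private lemma sum_mul_shift (p : ℕ) [Fact p.Prime] (hp2 : p ≠ 2) (c : ZMod p) (hc : c ≠ 0) :
    ∑ t : ZMod p, quadraticChar (ZMod p) t * quadraticChar (ZMod p) (t + c) = -1 := by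
  set χ := quadraticChar (ZMod p) with hχ
  have h0 : χ 0 = 0 := quadraticChar_zero
  rw [← Finset.add_sum_erase univ _ (mem_univ (0 : ZMod p)), h0, zero_mul, zero_add]
  have hstep : ∀ t ∈ (univ : Finset (ZMod p)).erase 0,
      χ t * χ (t + c) = χ (1 + c * t⁻¹) := by
    intro t ht
    have ht0 : t ≠ 0 := (Finset.mem_erase.mp ht).1
    have : t + c = t * (1 + c * t⁻¹) := by field_simp
    rw [this, map_mul, ← mul_assoc, ← sq, quadraticChar_sq_one ht0, one_mul]
  rw [Finset.sum_congr rfl hstep]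
  rw [show (∑ t ∈ (univ : Finset (ZMod p)).erase 0, χ (1 + c * t⁻¹)) =
      ∑ u ∈ (univ : Finset (ZMod p)).erase 1, χ u from ?_]
  · exact sum_erase_one p hp2
  · apply Finset.sum_nbij' (i := fun t => 1 + c * t⁻¹) (j := fun u => c * (u - 1)⁻¹)
    · intro t ht
      have ht0 : t ≠ 0 := (Finset.mem_erase.mp ht).1
      refine Finset.mem_erase.mpr ⟨?_, mem_univ _⟩
      have : c * t⁻¹ ≠ 0 := mul_ne_zero hc (inv_ne_zero ht0)
      intro h
      exact this (by linear_combination h)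
    · intro u hu
      have hu1 : u ≠ 1 := (Finset.mem_erase.mp hu).1
      refine Finset.mem_erase.mpr ⟨?_, mem_univ _⟩
      exact mul_ne_zero hc (inv_ne_zero (sub_ne_zero.mpr hu1))
    · intro t ht
      have ht0 : t ≠ 0 := (Finset.mem_erase.mp ht).1
      field_simp
      simp [hc]
    · intro u hu
      have hu1 : u ≠ 1 := (Finset.mem_erase.mp hu).1
      have : u - 1 ≠ 0 := sub_ne_zero.mpr hu1
      field_simp
      ring
    · intro t _; rfl

private lemma key_sum (p : ℕ) [Fact p.Prime] (hp2 : p ≠ 2) (c : ZMod p)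
    (hc : quadraticChar (ZMod p) c = -1) :
    ∑ i : Fin ((p - 1) / 2),
      quadraticChar (ZMod p) ((((i : ℕ) + 1 : ℕ) : ZMod p) ^ 2 + c) = 0 := by
  set χ := quadraticChar (ZMod p) with hχ
  have hp : p.Prime := Fact.out
  have hodd : p % 2 = 1 := Nat.odd_iff.mp (hp.odd_of_ne_two hp2)
  have hp2le : 2 ≤ p := hp.two_le
  set n := (p - 1) / 2 with hn
  have h2n : 2 * n + 1 = p := by omega
  have hc0 : c ≠ 0 := by
    intro h; rw [h, quadraticChar_zero] at hc; norm_num at hc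
  set f : Fin n → ZMod p := fun i => (((i : ℕ) + 1 : ℕ) : ZMod p) with hf
  have hne : ∀ i : Fin n, f i ≠ 0 := by
    intro i h
    rw [hf] at h
    rw [ZMod.natCast_eq_zero_iff] at h
    have hi := i.isLt
    have := Nat.le_of_dvd (by omega) h
    omega
  have hval : ∀ i : Fin n, (f i).val = (i : ℕ) + 1 := by
    intro i
    have hi := i.isLt
    exact ZMod.val_cast_of_lt (by omega)
  set g : Fin n → ZMod p := fun i => f i ^ 2 with hg
  have hginj : Function.Injective g := by
    intro i j h
    have h2 : (f i - f j) * (f i + f j) = 0 := by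
      have h' : f i ^ 2 = f j ^ 2 := h
      linear_combination h'
    rcases mul_eq_zero.mp h2 with h3 | h3
    · have h4 : f i = f j := sub_eq_zero.mp h3
      have : (f i).val = (f j).val := by rw [h4]
      rw [hval i, hval j] at this
      exact Fin.ext (by omega)
    · exfalso
      have hij : f i + f j = ((((i : ℕ) + 1) + ((j : ℕ) + 1) : ℕ) : ZMod p) := by
        push_cast [hf]; ring
      rw [hij, ZMod.natCast_eq_zero_iff] at h3
      have hi := i.isLt; have hj := j.isLt
      have := Nat.le_of_dvd (by omega) h3
      omega
  have hgsq : ∀ i : Fin n, χ (g i) = 1 := fun i => quadraticChar_sq_one' (hne i)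
  have hgne : ∀ i : Fin n, g i ≠ 0 := fun i => pow_ne_zero 2 (hne i)
  have hsurj : ∀ t : ZMod p, t ≠ 0 → IsSquare t → ∃ i : Fin n, g i = t := by
    rintro t ht ⟨x, rfl⟩
    have hx0 : x ≠ 0 := fun h => ht (by rw [h, mul_zero])
    have hxv : x.val ≠ 0 := fun h => hx0 (by rwa [← ZMod.val_eq_zero])
    have hxlt : x.val < p := ZMod.val_lt x
    have hxx : ((x.val : ℕ) : ZMod p) = x := ZMod.natCast_zmod_val x
    by_cases hle : x.val ≤ n
    · refine ⟨⟨x.val - 1, by omega⟩, ?_⟩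
      show ((((x.val - 1 : ℕ)) + 1 : ℕ) : ZMod p) ^ 2 = x * x
      rw [show (x.val - 1) + 1 = x.val by omega, hxx]; ring
    · refine ⟨⟨p - x.val - 1, by omega⟩, ?_⟩
      show ((((p - x.val - 1 : ℕ)) + 1 : ℕ) : ZMod p) ^ 2 = x * x
      rw [show (p - x.val - 1) + 1 = p - x.val by omega]
      have : ((p - x.val : ℕ) : ZMod p) = -x := by
        rw [Nat.cast_sub (le_of_lt hxlt), hxx, ZMod.natCast_self, zero_sub]
      rw [this]; ring
  -- the image of g
  set s : Finset (ZMod p) := Finset.image g univ with hs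
  have hsum_img : ∑ i : Fin n, χ (g i + c) = ∑ t ∈ s, χ (t + c) := by
    rw [hs, Finset.sum_image (fun a _ b _ h => hginj h)]
  have hTot : ∑ t : ZMod p, (1 + χ t) * χ (t + c) = -1 := by
    have e1 : ∑ t : ZMod p, χ (t + c) = 0 := by
      have heq := Fintype.sum_equiv (Equiv.addRight c) (fun t => χ (t + c)) χ (fun t => rfl)
      rw [heq]
      exact quadraticChar_sum_zero (by rw [ZMod.ringChar_zmod_n]; exact hp2)
    have e2 := sum_mul_shift p hp2 c hc0
    calc ∑ t : ZMod p, (1 + χ t) * χ (t + c)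
        = ∑ t : ZMod p, (χ (t + c) + χ t * χ (t + c)) := by
          apply Finset.sum_congr rfl; intro t _; ring
      _ = (∑ t : ZMod p, χ (t + c)) + ∑ t : ZMod p, χ t * χ (t + c) :=
          Finset.sum_add_distrib
      _ = -1 := by rw [e1, e2]; ring
  have hsplit : (∑ t ∈ s, (1 + χ t) * χ (t + c)) + ∑ t ∈ sᶜ, (1 + χ t) * χ (t + c)
      = ∑ t : ZMod p, (1 + χ t) * χ (t + c) := Finset.sum_add_sum_compl s _
  have hin : ∑ t ∈ s, (1 + χ t) * χ (t + c) = 2 * ∑ t ∈ s, χ (t + c) := by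
    rw [Finset.mul_sum]
    apply Finset.sum_congr rfl
    intro t ht
    obtain ⟨i, _, rfl⟩ := Finset.mem_image.mp ht
    rw [hgsq i]; ring
  have h0mem : (0 : ZMod p) ∈ sᶜ := by
    rw [Finset.mem_compl]
    intro h
    obtain ⟨i, _, hgi⟩ := Finset.mem_image.mp h
    exact hgne i hgi
  have hout : ∑ t ∈ sᶜ, (1 + χ t) * χ (t + c) = -1 := by
    rw [← Finset.add_sum_erase _ _ h0mem]
    have hz : (1 + χ 0) * χ (0 + c) = -1 := by
      rw [quadraticChar_zero, zero_add, add_zero, one_mul, hc]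
    rw [hz]
    have : ∑ t ∈ (sᶜ).erase 0, (1 + χ t) * χ (t + c) = 0 := by
      apply Finset.sum_eq_zero
      intro t ht
      have ht0 : t ≠ 0 := (Finset.mem_erase.mp ht).1
      have hts : t ∉ s := Finset.mem_compl.mp (Finset.mem_erase.mp ht).2
      have : χ t = -1 := by
        rw [hχ, quadraticChar_neg_one_iff_not_isSquare]
        intro hsq
        obtain ⟨i, hi⟩ := hsurj t ht0 hsq
        exact hts (Finset.mem_image.mpr ⟨i, mem_univ i, hi⟩)
      rw [this]; ring
    rw [this]; ring
  have hA : ∑ t ∈ s, χ (t + c) = 0 := by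
    rw [hin, hout] at hsplit
    rw [hTot] at hsplit
    linarith
  calc ∑ i : Fin n, χ ((((i : ℕ) + 1 : ℕ) : ZMod p) ^ 2 + c)
      = ∑ i : Fin n, χ (g i + c) := rfl
    _ = 0 := by rw [hsum_img, hA]

theorem stmt11 (p : ℕ) [Fact p.Prime] (hp2 : p ≠ 2) (d : ℤ)
    (hd : legendreSym p d = -1) :
    (Matrix.of fun i j : Fin ((p - 1) / 2) =>
        legendreSym p (((i : ℤ) + 1) ^ 2 + d * ((j : ℤ) + 1) ^ 2)).det = 0 := by
  have hp : p.Prime := Fact.out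
  have hodd : p % 2 = 1 := Nat.odd_iff.mp (hp.odd_of_ne_two hp2)
  have h2le := hp.two_le
  have hn0 : 0 < (p - 1) / 2 := by omega
  by_contra hdet
  have hv : Matrix.vecMul (fun _ : Fin ((p - 1) / 2) => (1 : ℤ))
      (Matrix.of fun i j : Fin ((p - 1) / 2) =>
        legendreSym p (((i : ℤ) + 1) ^ 2 + d * ((j : ℤ) + 1) ^ 2)) = 0 := by
    funext j
    simp only [Matrix.vecMul, dotProduct, Matrix.of_apply, one_mul, Pi.zero_apply]
    set c : ZMod p := (d : ZMod p) * ((((j : ℕ) + 1 : ℕ)) : ZMod p) ^ 2 with hc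
    have hjne : ((((j : ℕ) + 1 : ℕ)) : ZMod p) ≠ 0 := by
      intro h
      rw [ZMod.natCast_eq_zero_iff] at h
      have hj := j.isLt
      have := Nat.le_of_dvd (by omega) h
      omega
    have hcc : quadraticChar (ZMod p) c = -1 := by
      rw [hc, map_mul, quadraticChar_sq_one' hjne, mul_one]
      exact hd
    have hk := key_sum p hp2 c hcc
    rw [← hk]
    apply Finset.sum_congr rfl
    intro i _
    show legendreSym p _ = _
    unfold legendreSym
    congr 1
    rw [hc]
    push_cast
    ring
  exact one_ne_zero (congrFun (Matrix.eq_zero_of_vecMul_eq_zero hdet hv) ⟨0, hn0⟩)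
end

section
/- Let p ≡ 1 (mod 4) be a prime, n = (p-1)/2, and let d be a quadratic residue modulo p. Then S(d,p) = sgn(π_p(d)) · S(1,p), where S(d,p) = det[((i^2+d·j^2)/p)]_{1≤i,j≤n} and π_p(d) is the permutation of {1^2,...,n^2 mod p} induced by multiplication by d. -/
open scoped Classical

lemma legendre_congr (p : ℕ) [Fact p.Prime] {a b : ℤ} (h : (a : ZMod p) = (b : ZMod p)) :
    legendreSym p a = legendreSym p b := by
  unfold legendreSym
  rw [h]

lemma cast_succ_ne_zero (p : ℕ) [Fact p.Prime] (k : Fin ((p - 1) / 2)) :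
    (((k : ℕ) + 1 : ℕ) : ZMod p) ≠ 0 := by
  have hlt : (k : ℕ) + 1 < p := by
    have h2 := (Fact.out : p.Prime).two_le
    have := k.2
    omega
  rw [Ne, ZMod.natCast_eq_zero_iff]
  intro h
  have := Nat.le_of_dvd (by omega) h
  omega

/-- Map from `Fin ((p-1)/2)` to the squares in `(ZMod p)ˣ`, sending `k` to `(k+1)^2`. -/
noncomputable def sqMap (p : ℕ) [Fact p.Prime] (k : Fin ((p - 1) / 2)) :
    {x : (ZMod p)ˣ // IsSquare x} :=
  ⟨(isUnit_iff_ne_zero.mpr (cast_succ_ne_zero p k)).unit ^ 2,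
    ⟨(isUnit_iff_ne_zero.mpr (cast_succ_ne_zero p k)).unit, sq _⟩⟩

lemma sqMap_val (p : ℕ) [Fact p.Prime] (k : Fin ((p - 1) / 2)) :
    (((sqMap p k : {x : (ZMod p)ˣ // IsSquare x}) : (ZMod p)ˣ) : ZMod p)
      = (((k : ℕ) + 1 : ℕ) : ZMod p) ^ 2 := by
  simp [sqMap]

lemma sqMap_bijective (p : ℕ) [Fact p.Prime] (hp4 : p % 4 = 1) :
    Function.Bijective (sqMap p) := by
  have hp2 : 2 * ((p - 1) / 2) + 1 = p := by
    have h1 : p ≠ 1 := (Fact.out : p.Prime).one_lt.ne'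
    omega
  constructor
  · intro a b hab
    have h : ((((a : ℕ) + 1 : ℕ) : ZMod p)) ^ 2 = ((((b : ℕ) + 1 : ℕ) : ZMod p)) ^ 2 := by
      rw [← sqMap_val p a, ← sqMap_val p b, hab]
    rw [sq, sq, mul_self_eq_mul_self_iff] at h
    rcases h with h | h
    · have ha := a.2
      have hb := b.2
      have := congrArg ZMod.val h
      rw [ZMod.val_cast_of_lt (by omega), ZMod.val_cast_of_lt (by omega)] at this
      exact Fin.ext (by omega)
    · exfalso
      have h0 : ((((a : ℕ) + 1) + ((b : ℕ) + 1) : ℕ) : ZMod p) = 0 := by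
        push_cast
        push_cast at h
        rw [h]; ring
      rw [ZMod.natCast_eq_zero_iff] at h0
      have := Nat.le_of_dvd (by omega) h0
      have ha := a.2
      have hb := b.2
      omega
  · rintro ⟨x, y, hxy⟩
    have hy0 : (y : ZMod p) ≠ 0 := y.ne_zero
    set v := (y : ZMod p).val with hv
    have hvlt : v < p := ZMod.val_lt _
    have hv0 : v ≠ 0 := by
      intro h
      exact hy0 ((ZMod.val_eq_zero _).mp h)
    have hvy : ((v : ℕ) : ZMod p) = (y : ZMod p) := ZMod.natCast_rightInverse _
    by_cases hcase : v ≤ (p - 1) / 2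
    · refine ⟨⟨v - 1, by omega⟩, ?_⟩
      apply Subtype.ext
      apply Units.ext
      rw [sqMap_val]
      have h1 : (v - 1) + 1 = v := by omega
      show _ = ((x : (ZMod p)ˣ) : ZMod p)
      rw [h1, hvy, hxy]
      push_cast
      ring
    · refine ⟨⟨p - v - 1, by omega⟩, ?_⟩
      apply Subtype.ext
      apply Units.ext
      rw [sqMap_val]
      have h1 : (p - v - 1) + 1 = p - v := by omega
      rw [h1]
      have h2 : ((p - v : ℕ) : ZMod p) = -(y : ZMod p) := by
        rw [Nat.cast_sub (by omega), ZMod.natCast_self, hvy]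
        ring
      show _ = ((x : (ZMod p)ˣ) : ZMod p)
      rw [h2, hxy]
      push_cast
      ring

theorem stmt12 (p : ℕ) [Fact p.Prime] (hp4 : p % 4 = 1) (d : ℤ)
    (hd : legendreSym p d = 1)
    (u : (ZMod p)ˣ) (hud : (u : ZMod p) = (d : ZMod p)) (hu : IsSquare u) :
    (Matrix.of fun i j : Fin ((p - 1) / 2) =>
        legendreSym p (((i : ℤ) + 1) ^ 2 + d * ((j : ℤ) + 1) ^ 2)).det =
      (Equiv.Perm.sign (piP p u hu) : ℤ) *
        (Matrix.of fun i j : Fin ((p - 1) / 2) =>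
          legendreSym p (((i : ℤ) + 1) ^ 2 + ((j : ℤ) + 1) ^ 2)).det := by
  set n := (p - 1) / 2
  let e : Fin n ≃ {x : (ZMod p)ˣ // IsSquare x} := Equiv.ofBijective _ (sqMap_bijective p hp4)
  let σ : Equiv.Perm (Fin n) := e.symm.permCongr (piP p u hu)
  have hσ : ∀ j : Fin n, e (σ j) = piP p u hu (e j) := by
    intro j
    simp [σ, Equiv.permCongr_apply]
  have hsq : ∀ j : Fin n, ((((σ j : ℕ) + 1 : ℕ) : ZMod p)) ^ 2
      = (d : ZMod p) * (((j : ℕ) + 1 : ℕ) : ZMod p) ^ 2 := by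
    intro j
    have := congrArg (fun x : {x : (ZMod p)ˣ // IsSquare x} => ((x : (ZMod p)ˣ) : ZMod p)) (hσ j)
    simp only [piP, Equiv.coe_fn_mk, Units.val_mul] at this
    have he : ∀ k : Fin n, (((e k : {x : (ZMod p)ˣ // IsSquare x}) : (ZMod p)ˣ) : ZMod p)
        = (((k : ℕ) + 1 : ℕ) : ZMod p) ^ 2 := fun k => sqMap_val p k
    rw [he, he] at this
    rw [this, hud]
  have hmat : (Matrix.of fun i j : Fin n =>
        legendreSym p (((i : ℤ) + 1) ^ 2 + d * ((j : ℤ) + 1) ^ 2)) =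
      (Matrix.of fun i j : Fin n =>
        legendreSym p (((i : ℤ) + 1) ^ 2 + ((j : ℤ) + 1) ^ 2)).submatrix id σ := by
    ext i j
    simp only [Matrix.of_apply, Matrix.submatrix_apply, id]
    apply legendre_congr
    have := hsq j
    push_cast
    push_cast at this
    rw [this]
  have hs : Equiv.Perm.sign σ = Equiv.Perm.sign (piP p u hu) := Equiv.Perm.sign_permCongr _ _
  rw [hmat, Matrix.det_permute', hs]
  norm_cast
end
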